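/- arXiv:1604.03774 — 8 statements merged into one kernel-verified Lean document; each statement's English description precedes it below -/
import Mathlib

section
/- Let C_i be a linear [n, k_i, d_i] code over the finite field F_q for 1 ≤ i ≤ s, and let A = (a_{ij}) be an s×m matrix over F_q whose rows are linearly independent (full-row-rank). Then the matrix-product code C = [C_1,…,C_s]A is a linear code over F_q of length nm and dimension k_1 + k_2 + ⋯ + k_s, and its minimum distance satisfies d(C) ≥ min{ d_1·d(U_A(1)), d_2·d(U_A(2)), …, d_s·d(U_A(s)) }. -/
open Polynomial Matrix Finset

variable {F : Type*} [Field F]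

/-- The minimum (Hamming) distance of a linear code `C ⊆ F^ι`:
the least Hamming weight of a nonzero codeword. -/
noncomputable def minDist {ι : Type*} [Fintype ι] [DecidableEq F]
    (C : Submodule F (ι → F)) : ℕ :=
  sInf {d | ∃ x ∈ C, x ≠ 0 ∧ hammingNorm x = d}

/-- The Euclidean dual of a linear code. -/
def dualCode {ι : Type*} [Fintype ι] (C : Submodule F (ι → F)) :
    Submodule F (ι → F) where
  carrier := {a | ∀ b ∈ C, ∑ i, a i * b i = 0}
  add_mem' := by
    intro a b ha hb c hc
    simp only [Pi.add_apply, add_mul, Finset.sum_add_distrib,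
      ha c hc, hb c hc, add_zero]
  zero_mem' := by
    intro b hb
    simp
  smul_mem' := by
    intro r a ha b hb
    simp only [Pi.smul_apply, smul_eq_mul, mul_assoc, ← Finset.mul_sum,
      ha b hb, mul_zero]

/-- `C` is a linear complementary dual (LCD) code. -/
def IsLCD {ι : Type*} [Fintype ι] (C : Submodule F (ι → F)) : Prop :=
  C ⊓ dualCode C = ⊥

/-- The Hermitian dual (with respect to `⟨a,b⟩ = ∑ i, a i * (b i)^l`) of a linear code. -/
def hermitianDual (l : ℕ) {ι : Type*} [Fintype ι] (C : Submodule F (ι → F)) :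
    Submodule F (ι → F) where
  carrier := {a | ∀ b ∈ C, ∑ i, a i * (b i) ^ l = 0}
  add_mem' := by
    intro a b ha hb c hc
    simp only [Pi.add_apply, add_mul, Finset.sum_add_distrib,
      ha c hc, hb c hc, add_zero]
  zero_mem' := by
    intro b hb
    simp
  smul_mem' := by
    intro r a ha b hb
    simp only [Pi.smul_apply, smul_eq_mul, mul_assoc, ← Finset.mul_sum,
      ha b hb, mul_zero]

/-- `C` is a Hermitian linear complementary dual code. -/
def IsHermitianLCD (l : ℕ) {ι : Type*} [Fintype ι] (C : Submodule F (ι → F)) : Prop :=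
  C ⊓ hermitianDual l C = ⊥

/-- The matrix-product code `[C_1, …, C_s]·A`: all concatenated vectors
`(∑ i a_{i1} c_i, …, ∑ i a_{im} c_i)` with `c_i ∈ C_i`; coordinates are indexed by
`Fin m × Fin n` (block `j`, position `t` within block). -/
def matrixProductCode {s m n : ℕ} (A : Matrix (Fin s) (Fin m) F)
    (C : Fin s → Submodule F (Fin n → F)) :
    Submodule F (Fin m × Fin n → F) where
  carrier := {x | ∃ c : Fin s → (Fin n → F), (∀ i, c i ∈ C i) ∧
    x = fun p => ∑ i, A i p.1 * c i p.2}
  add_mem' := by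
    rintro x y ⟨c, hc, rfl⟩ ⟨d, hd, rfl⟩
    refine ⟨fun i => c i + d i, fun i => (C i).add_mem (hc i) (hd i), ?_⟩
    funext p
    simp [mul_add, Finset.sum_add_distrib]
  zero_mem' := ⟨0, fun i => (C i).zero_mem, by funext p; simp⟩
  smul_mem' := by
    rintro r x ⟨c, hc, rfl⟩
    refine ⟨fun i => r • c i, fun i => (C i).smul_mem r (hc i), ?_⟩
    funext p
    simp [Finset.mul_sum, mul_left_comm]

/-- A matrix is non-singular by columns (NSC) if, for every `t ≤ s` and every strictly
increasing choice of `t` columns, the `t × t` submatrix formed from the first `t` rows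
and those columns is non-singular. -/
def NSC {s m : ℕ} (A : Matrix (Fin s) (Fin m) F) : Prop :=
  ∀ (t : ℕ) (ht : t ≤ s) (j : Fin t → Fin m), StrictMono j →
    (Matrix.of fun a b : Fin t => A (Fin.castLE ht a) (j b)).det ≠ 0

/-- The cyclic code of length `n` with generator polynomial `g` (a divisor of `Xⁿ - 1`),
viewed in `F^n` via the coefficient identification: a word `c` lies in the code iff the
associated polynomial `∑ cᵢ Xⁱ` (of degree `< n`) is a multiple of `g`. -/
def cyclicCode (n : ℕ) (g : F[X]) : Submodule F (Fin n → F) where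
  carrier := {c | g ∣ ∑ i : Fin n, Polynomial.C (c i) * Polynomial.X ^ (i : ℕ)}
  add_mem' := by
    intro a b ha hb
    have h : (∑ i : Fin n, Polynomial.C ((a + b) i) * Polynomial.X ^ (i : ℕ))
        = (∑ i : Fin n, Polynomial.C (a i) * Polynomial.X ^ (i : ℕ))
          + (∑ i : Fin n, Polynomial.C (b i) * Polynomial.X ^ (i : ℕ)) := by
      simp [add_mul, Finset.sum_add_distrib]
    simp only [Set.mem_setOf_eq] at ha hb ⊢
    rw [h]
    exact dvd_add ha hb
  zero_mem' := by simp
  smul_mem' := by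
    intro r a ha
    have h : (∑ i : Fin n, Polynomial.C ((r • a) i) * Polynomial.X ^ (i : ℕ))
        = Polynomial.C r * ∑ i : Fin n, Polynomial.C (a i) * Polynomial.X ^ (i : ℕ) := by
      simp [Finset.mul_sum, mul_assoc]
    simp only [Set.mem_setOf_eq] at ha ⊢
    rw [h]
    exact ha.mul_left _

/-- The conjugate-reciprocal polynomial
`f^⊥(x) = a₀^{-l} (a_k^l + a_{k-1}^l x + ⋯ + a₀^l x^k)` of `f = a₀ + a₁ x + ⋯ + a_k x^k`. -/
noncomputable def conjReciprocal (l : ℕ) (f : F[X]) : F[X] :=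
  Polynomial.C ((f.coeff 0 ^ l)⁻¹) *
    ∑ i ∈ Finset.range (f.natDegree + 1),
      Polynomial.C (f.coeff (f.natDegree - i) ^ l) * Polynomial.X ^ i

theorem stmt0 {F : Type*} [Field F] [Fintype F] [DecidableEq F]
    {s m n : ℕ} (A : Matrix (Fin s) (Fin m) F)
    (hFRR : LinearIndependent F A)
    (C : Fin s → Submodule F (Fin n → F)) (k d : Fin s → ℕ)
    (hk : ∀ i, Module.finrank F (C i) = k i)
    (hC : ∀ i, C i ≠ ⊥)
    (hd : ∀ i, minDist (C i) = d i) :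
    Module.finrank F (matrixProductCode A C) = ∑ i, k i ∧
    sInf {v | ∃ i : Fin s,
        v = d i * minDist (Submodule.span F (A '' {j : Fin s | j ≤ i}))}
      ≤ minDist (matrixProductCode A C) := by
  classical
  constructor
  · -- dimension statement
    let Φ : (∀ i, C i) →ₗ[F] (Fin m × Fin n → F) :=
      { toFun := fun c p => ∑ i, A i p.1 * (c i : Fin n → F) p.2
        map_add' := by
          intro a b; funext p
          simp [mul_add, Finset.sum_add_distrib]
        map_smul' := by
          intro r a; funext p
          simp [Finset.mul_sum, mul_left_comm] }
    have hrange : LinearMap.range Φ = matrixProductCode A C := by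
      ext x
      constructor
      · rintro ⟨c, rfl⟩
        exact ⟨fun i => (c i : Fin n → F), fun i => (c i).2, rfl⟩
      · rintro ⟨c, hc, rfl⟩
        exact ⟨fun i => ⟨c i, hc i⟩, rfl⟩
    have hinj : Function.Injective Φ := by
      rw [← LinearMap.ker_eq_bot, eq_bot_iff]
      intro c hc
      have hc0 : Φ c = 0 := hc
      have key : ∀ t i, (c i : Fin n → F) t = 0 := by
        intro t i
        refine Fintype.linearIndependent_iff.mp hFRR (fun i => (c i : Fin n → F) t) ?_ i
        funext j
        have h := congrFun hc0 (j, t)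
        simpa [Φ, mul_comm, Finset.sum_apply] using h
      have hc' : c = 0 := funext fun i => Subtype.ext (funext fun t => key t i)
      simp [hc']
    calc Module.finrank F (matrixProductCode A C)
        = Module.finrank F (LinearMap.range Φ) := by rw [hrange]
      _ = Module.finrank F (∀ i, C i) := LinearMap.finrank_range_of_inj hinj
      _ = ∑ i, Module.finrank F (C i) := Module.finrank_pi_fintype F
      _ = ∑ i, k i := by simp [hk]
  · -- minimum distance bound
    have hsplit : ∀ x : Fin m × Fin n → F,
        hammingNorm x = ∑ t : Fin n, hammingNorm (fun j => x (j, t)) := by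
      intro x
      show (Finset.univ.filter fun p : Fin m × Fin n => x p ≠ 0).card
          = ∑ t : Fin n, (Finset.univ.filter fun j : Fin m => x (j, t) ≠ 0).card
      rw [Finset.card_eq_sum_card_fiberwise
        (f := Prod.snd) (t := Finset.univ) (fun p _ => Finset.mem_univ p.2)]
      refine Finset.sum_congr rfl fun t _ => ?_
      refine Finset.card_bij' (fun p _ => p.1) (fun j _ => (j, t)) ?_ ?_ ?_ ?_
      · intro p hp
        obtain ⟨h1, h3⟩ := Finset.mem_filter.mp hp
        have h2 := (Finset.mem_filter.mp h1).2
        refine Finset.mem_filter.mpr ⟨Finset.mem_univ _, ?_⟩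
        show x (p.1, t) ≠ 0
        rwa [show ((p.1, t) : Fin m × Fin n) = p from Prod.ext rfl h3.symm]
      · intro j hj
        have h2 := (Finset.mem_filter.mp hj).2
        exact Finset.mem_filter.mpr ⟨Finset.mem_filter.mpr ⟨Finset.mem_univ _, h2⟩, rfl⟩
      · intro p hp
        exact Prod.ext rfl ((Finset.mem_filter.mp hp).2).symm
      · intro j hj
        rfl
    have main : ∀ x ∈ matrixProductCode A C, x ≠ 0 →
        sInf {v | ∃ i : Fin s,
            v = d i * minDist (Submodule.span F (A '' {j : Fin s | j ≤ i}))}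
          ≤ hammingNorm x := by
      rintro x ⟨c, hc, rfl⟩ hx
      set T : Finset (Fin s) := Finset.univ.filter (fun i => c i ≠ 0) with hT
      have hTne : T.Nonempty := by
        by_contra h
        apply hx
        funext p
        have hall : ∀ i, c i = 0 := by
          intro i
          by_contra hi
          exact h ⟨i, by simp [hT, hi]⟩
        simp [hall]
      set i := T.max' hTne with hi
      have hciT : c i ≠ 0 := by
        have := T.max'_mem hTne
        simpa [hT] using this
      have hmax : ∀ i', ¬ i' ≤ i → c i' = 0 := by
        intro i' h
        by_contra hi'
        exact h (T.le_max' i' (by simp [hT, hi']))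
      set r : Fin n → Fin m → F := fun t j => ∑ i', A i' j * c i' t with hr
      have hr2 : ∀ t, r t = ∑ i', c i' t • A i' := by
        intro t; funext j
        simp [hr, Finset.sum_apply, mul_comm]
      set U : Submodule F (Fin m → F) :=
        Submodule.span F (A '' {j : Fin s | j ≤ i}) with hUdef
      have hrU : ∀ t, r t ∈ U := by
        intro t
        rw [hr2]
        rw [← Finset.sum_filter_of_ne (p := fun i' => i' ≤ i)
          (fun i' _ hne => by
            by_contra h
            exact hne (by rw [hmax i' h]; simp))]
        refine Submodule.sum_mem _ fun i' hi' => ?_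
        refine Submodule.smul_mem _ _ (Submodule.subset_span ?_)
        exact ⟨i', by simpa using (Finset.mem_filter.mp hi').2, rfl⟩
      have hrne : ∀ t, c i t ≠ 0 → r t ≠ 0 := by
        intro t h h0
        have heq : ∑ i' : Fin s, c i' t • A i' = 0 := by rw [← hr2, h0]
        exact h (Fintype.linearIndependent_iff.mp hFRR (fun i' => c i' t) heq i)
      set supp : Finset (Fin n) := Finset.univ.filter (fun t => c i t ≠ 0) with hsupp
      have hsupp_card : supp.card = hammingNorm (c i) := by rw [hsupp]; rfl
      have hdle : d i ≤ hammingNorm (c i) := by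
        rw [← hd i]
        exact Nat.sInf_le ⟨c i, hc i, hciT, rfl⟩
      have hUle : ∀ t ∈ supp, minDist U ≤ hammingNorm (r t) := by
        intro t ht
        have hct : c i t ≠ 0 := by simpa [hsupp] using ht
        exact Nat.sInf_le ⟨r t, hrU t, hrne t hct, rfl⟩
      calc sInf {v | ∃ i : Fin s,
              v = d i * minDist (Submodule.span F (A '' {j : Fin s | j ≤ i}))}
          ≤ d i * minDist U := Nat.sInf_le ⟨i, by rw [hUdef]⟩
        _ ≤ hammingNorm (c i) * minDist U := Nat.mul_le_mul_right _ hdle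
        _ = supp.card * minDist U := by rw [hsupp_card]
        _ ≤ ∑ t ∈ supp, hammingNorm (r t) := by
            have h := Finset.card_nsmul_le_sum supp
              (fun t => hammingNorm (r t)) (minDist U) hUle
            simpa [smul_eq_mul] using h
        _ ≤ ∑ t : Fin n, hammingNorm (r t) :=
            Finset.sum_le_sum_of_subset (Finset.filter_subset _ _)
        _ = hammingNorm (fun p : Fin m × Fin n => ∑ i', A i' p.1 * c i' p.2) := by
            rw [hsplit (fun p : Fin m × Fin n => ∑ i', A i' p.1 * c i' p.2)]
    rcases Nat.eq_zero_or_pos s with hs | hs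
    · have hempty : {v : ℕ | ∃ i : Fin s,
          v = d i * minDist (Submodule.span F (A '' {j : Fin s | j ≤ i}))} = ∅ := by
        ext v
        simp only [Set.mem_setOf_eq, Set.mem_empty_iff_false, iff_false]
        rintro ⟨i, -⟩
        exact absurd i.isLt (by omega)
      rw [hempty, Nat.sInf_empty]
      exact Nat.zero_le _
    · obtain ⟨i0⟩ : Nonempty (Fin s) := ⟨⟨0, hs⟩⟩
      obtain ⟨c0, hc0m, hc0⟩ := (Submodule.ne_bot_iff _).mp (hC i0)
      have hA0 : A i0 ≠ 0 := hFRR.ne_zero i0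
      obtain ⟨j0, hj0⟩ : ∃ j, A i0 j ≠ 0 := by
        by_contra h; push_neg at h; exact hA0 (funext h)
      obtain ⟨t0, ht0⟩ : ∃ t, c0 t ≠ 0 := by
        by_contra h; push_neg at h; exact hc0 (funext h)
      have hx0m : (fun p : Fin m × Fin n => A i0 p.1 * c0 p.2) ∈ matrixProductCode A C := by
        refine ⟨fun i' => if i' = i0 then c0 else 0, fun i' => ?_, ?_⟩
        · show (if i' = i0 then c0 else 0) ∈ C i'
          split
          · next h => exact h ▸ hc0m
          · exact Submodule.zero_mem _
        · funext p
          rw [Finset.sum_eq_single i0]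
          · simp
          · intro b _ hb; simp [hb]
          · intro h; exact absurd (Finset.mem_univ i0) h
      have hx0 : (fun p : Fin m × Fin n => A i0 p.1 * c0 p.2) ≠ 0 := by
        intro h
        have := congrFun h (j0, t0)
        simp only [Pi.zero_apply, mul_eq_zero] at this
        tauto
      show sInf _ ≤ sInf {v | ∃ x ∈ matrixProductCode A C, x ≠ 0 ∧ hammingNorm x = v}
      refine le_csInf ⟨hammingNorm (fun p : Fin m × Fin n => A i0 p.1 * c0 p.2),
        _, hx0m, hx0, rfl⟩ ?_
      rintro b ⟨x, hxm, hx, rfl⟩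
      exact main x hxm hx
end

section
/- Let C_i be a linear [n, k_i, d_i] code over the finite field F_q for 1 ≤ i ≤ s, and let A be an s×m matrix over F_q that is non-singular by columns (NSC). Then the matrix-product code C = [C_1,…,C_s]A has minimum distance d(C) ≥ d* := min{ m·d_1, (m−1)·d_2, …, (m−s+1)·d_s }. -/
open Polynomial Matrix Finset

variable {F : Type*} [Field F]

theorem stmt1 {F : Type*} [Field F] [Fintype F] [DecidableEq F]
    {s m n : ℕ} (hsm : s ≤ m) (A : Matrix (Fin s) (Fin m) F)
    (hNSC : NSC A)
    (C : Fin s → Submodule F (Fin n → F)) (k d : Fin s → ℕ)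
    (hk : ∀ i, Module.finrank F (C i) = k i)
    (hC : ∀ i, C i ≠ ⊥)
    (hd : ∀ i, minDist (C i) = d i) :
    sInf {v | ∃ i : Fin s, v = (m - (i : ℕ)) * d i}
      ≤ minDist (matrixProductCode A C) := by
  classical
  rcases Nat.eq_zero_or_pos s with hs0 | hs
  · subst hs0
    have hempty : {v | ∃ i : Fin 0, v = (m - (i : ℕ)) * d i} = ∅ := by
      ext v; simp [Fin.isEmpty]
    rw [hempty, Nat.sInf_empty]
    exact Nat.zero_le _
  -- key bound for nonzero codewords
  have key : ∀ x, x ∈ matrixProductCode A C → x ≠ 0 →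
      sInf {v | ∃ i : Fin s, v = (m - (i : ℕ)) * d i} ≤ hammingNorm x := by
    intro x hx hxne
    obtain ⟨c, hc, rfl⟩ := hx
    have hcsupp : (Finset.univ.filter fun i : Fin s => c i ≠ 0).Nonempty := by
      by_contra h
      apply hxne
      have hz : ∀ i, c i = 0 := by
        intro i
        by_contra hi
        exact h ⟨i, Finset.mem_filter.mpr ⟨Finset.mem_univ _, hi⟩⟩
      funext p
      simp [hz]
    set t : Fin s := (Finset.univ.filter fun i : Fin s => c i ≠ 0).max' hcsupp with htdef
    have htmem := (Finset.univ.filter fun i : Fin s => c i ≠ 0).max'_mem hcsupp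
    have hct : c t ≠ 0 := (Finset.mem_filter.mp htmem).2
    have hgt : ∀ i : Fin s, t < i → c i = 0 := by
      intro i hi
      by_contra hci
      exact absurd (Finset.le_max' _ i (Finset.mem_filter.mpr ⟨Finset.mem_univ _, hci⟩))
        (not_le.mpr hi)
    have ht1 : (t : ℕ) + 1 ≤ s := t.isLt
    have hsum : ∀ (j : Fin m) (u : Fin n),
        ∑ a : Fin ((t : ℕ) + 1), A (Fin.castLE ht1 a) j * c (Fin.castLE ht1 a) u
          = ∑ i : Fin s, A i j * c i u := by
      intro j u
      have hmap : (∑ a : Fin ((t : ℕ) + 1), A (Fin.castLE ht1 a) j * c (Fin.castLE ht1 a) u)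
          = ∑ i ∈ Finset.univ.map (Fin.castLEEmb ht1), A i j * c i u :=
        (Finset.sum_map Finset.univ (Fin.castLEEmb ht1) (fun i => A i j * c i u)).symm
      rw [hmap]
      apply Finset.sum_subset (Finset.subset_univ _)
      intro i _ hi
      have hti : t < i := by
        rw [Fin.lt_def]
        by_contra hle
        apply hi
        simp only [Finset.mem_map, Finset.mem_univ, true_and]
        exact ⟨⟨(i : ℕ), Nat.lt_succ_of_le (not_lt.mp hle)⟩, by
          ext; simp [Fin.castLEEmb]⟩
      rw [hgt i hti]
      simp
    -- zero-block count bound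
    have hK : ∀ u : Fin n, c t u ≠ 0 →
        (Finset.univ.filter fun j : Fin m => ∑ i, A i j * c i u = 0).card ≤ (t : ℕ) := by
      intro u hu
      by_contra h
      push_neg at h
      obtain ⟨K', hK'sub, hK'card⟩ := Finset.exists_subset_card_eq (Nat.succ_le_of_lt h)
      set j := K'.orderEmbOfFin hK'card with hjdef
      have hdet := hNSC ((t : ℕ) + 1) ht1 (⇑j) j.strictMono
      set M := Matrix.of fun a b : Fin ((t : ℕ) + 1) => A (Fin.castLE ht1 a) (j b) with hMdef
      set v : Fin ((t : ℕ) + 1) → F := fun a => c (Fin.castLE ht1 a) u with hvdef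
      have hvM : Matrix.vecMul v M = 0 := by
        funext b
        have hjb : ∑ i : Fin s, A i (j b) * c i u = 0 := by
          have := hK'sub (K'.orderEmbOfFin_mem hK'card b)
          exact (Finset.mem_filter.mp this).2
        have : Matrix.vecMul v M b = ∑ a : Fin ((t : ℕ) + 1),
            A (Fin.castLE ht1 a) (j b) * c (Fin.castLE ht1 a) u := by
          simp only [Matrix.vecMul, dotProduct, hvdef, hMdef, Matrix.of_apply,
            Matrix.transpose_apply]
          exact Finset.sum_congr rfl fun a _ => mul_comm _ _
        rw [this, hsum, hjb]
        rfl
      have hv0 : v = 0 := by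
        have hU : IsUnit M.det := isUnit_iff_ne_zero.mpr hdet
        calc v = Matrix.vecMul v (M * M⁻¹) := by
              rw [Matrix.mul_nonsing_inv M hU, Matrix.vecMul_one]
          _ = Matrix.vecMul (Matrix.vecMul v M) M⁻¹ := by rw [Matrix.vecMul_vecMul]
          _ = 0 := by rw [hvM]; exact Matrix.zero_vecMul _

      have hcast : Fin.castLE ht1 (Fin.last (t : ℕ)) = t := by
        ext
        simp
      have hlast : v (Fin.last (t : ℕ)) = c t u := by
        show c (Fin.castLE ht1 (Fin.last (t : ℕ))) u = c t u
        rw [hcast]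
      rw [hv0] at hlast
      exact hu hlast.symm
    -- weight computation
    have hnorm : hammingNorm (fun p : Fin m × Fin n => ∑ i, A i p.1 * c i p.2)
        = ∑ u : Fin n,
          (Finset.univ.filter fun j : Fin m => ∑ i, A i j * c i u ≠ 0).card := by
      rw [hammingNorm, Finset.card_filter, Fintype.sum_prod_type, Finset.sum_comm]
      exact Finset.sum_congr rfl fun u _ => (Finset.card_filter _ _).symm
    have hdt : d t ≤ hammingNorm (c t) := by
      rw [← hd t, minDist]
      exact Nat.sInf_le ⟨c t, hc t, hct, rfl⟩
    have h1 : ∀ u ∈ (Finset.univ.filter fun u : Fin n => c t u ≠ 0),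
        m - (t : ℕ) ≤ (Finset.univ.filter fun j : Fin m =>
          ∑ i, A i j * c i u ≠ 0).card := by
      intro u hu
      have hu' : c t u ≠ 0 := (Finset.mem_filter.mp hu).2
      have hcompl : (Finset.univ.filter fun j : Fin m => ∑ i, A i j * c i u ≠ 0)
          = Finset.univ \ (Finset.univ.filter fun j : Fin m => ∑ i, A i j * c i u = 0) := by
        rw [← Finset.filter_not]
      rw [hcompl, Finset.card_sdiff_of_subset (Finset.filter_subset _ _), Finset.card_univ,
        Fintype.card_fin]
      exact Nat.sub_le_sub_left (hK u hu') m
    have hbound : (m - (t : ℕ)) * d t ≤ ∑ u : Fin n,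
        (Finset.univ.filter fun j : Fin m => ∑ i, A i j * c i u ≠ 0).card := by
      calc (m - (t : ℕ)) * d t ≤ (m - (t : ℕ)) * hammingNorm (c t) :=
            Nat.mul_le_mul_left _ hdt
        _ = ∑ _u ∈ (Finset.univ.filter fun u : Fin n => c t u ≠ 0), (m - (t : ℕ)) := by
            rw [Finset.sum_const, hammingNorm, smul_eq_mul, mul_comm]
        _ ≤ ∑ u ∈ (Finset.univ.filter fun u : Fin n => c t u ≠ 0),
              (Finset.univ.filter fun j : Fin m => ∑ i, A i j * c i u ≠ 0).card :=
            Finset.sum_le_sum h1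
        _ ≤ ∑ u : Fin n,
              (Finset.univ.filter fun j : Fin m => ∑ i, A i j * c i u ≠ 0).card :=
            Finset.sum_le_sum_of_subset (Finset.filter_subset _ _)
    calc sInf {v | ∃ i : Fin s, v = (m - (i : ℕ)) * d i} ≤ (m - (t : ℕ)) * d t :=
          Nat.sInf_le ⟨t, rfl⟩
      _ ≤ hammingNorm (fun p : Fin m × Fin n => ∑ i, A i p.1 * c i p.2) := by
          rw [hnorm]; exact hbound
  -- nonemptiness of the weight set of the matrix-product code
  obtain ⟨c₀, hc₀mem, hc₀ne⟩ := Submodule.exists_mem_ne_zero_of_ne_bot (hC ⟨0, hs⟩)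
  obtain ⟨u₀, hu₀⟩ : ∃ u, c₀ u ≠ 0 := by
    by_contra h
    push_neg at h
    exact hc₀ne (funext h)
  have hm : 0 < m := lt_of_lt_of_le hs hsm
  set cfun : Fin s → (Fin n → F) := fun i => if i = ⟨0, hs⟩ then c₀ else 0 with hcfun
  have hcmem : ∀ i, cfun i ∈ C i := by
    intro i
    by_cases hi : i = ⟨0, hs⟩
    · subst hi; simpa [hcfun] using hc₀mem
    · simp [hcfun, hi]
  have hxval : (fun p : Fin m × Fin n => ∑ i, A i p.1 * cfun i p.2)
      = fun p => A ⟨0, hs⟩ p.1 * c₀ p.2 := by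
    funext p
    rw [Finset.sum_eq_single (⟨0, hs⟩ : Fin s)]
    · simp [hcfun]
    · intro i _ hi; simp [hcfun, hi]
    · intro h; exact absurd (Finset.mem_univ _) h
  have hA0 : A ⟨0, hs⟩ ⟨0, hm⟩ ≠ 0 := by
    have hdet := hNSC 1 hs (fun _ => ⟨0, hm⟩) (Subsingleton.strictMono _)
    rwa [Matrix.det_fin_one, Matrix.of_apply] at hdet
  have hxne : (fun p : Fin m × Fin n => ∑ i, A i p.1 * cfun i p.2) ≠ 0 := by
    intro h
    have := congrFun h (⟨0, hm⟩, u₀)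
    rw [hxval] at h
    have := congrFun h (⟨0, hm⟩, u₀)
    exact (mul_ne_zero hA0 hu₀) this
  have hWne : {w | ∃ x ∈ matrixProductCode A C, x ≠ 0 ∧ hammingNorm x = w}.Nonempty :=
    ⟨hammingNorm (fun p : Fin m × Fin n => ∑ i, A i p.1 * cfun i p.2),
      (fun p : Fin m × Fin n => ∑ i, A i p.1 * cfun i p.2),
      ⟨cfun, hcmem, rfl⟩, hxne, rfl⟩
  rw [minDist]
  obtain ⟨x, hxmem, hxne', hxw⟩ := Nat.sInf_mem hWne
  calc sInf {v | ∃ i : Fin s, v = (m - (i : ℕ)) * d i} ≤ hammingNorm x := key x hxmem hxne'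
    _ = _ := hxw
end

section
/- Let C_i be a linear [n, k_i, d_i] code over the finite field F_q for 1 ≤ i ≤ s, and let A be an s×m matrix over F_q that is non-singular by columns (NSC) and upper-triangular (a_{ij} = 0 whenever i > j). Then the matrix-product code C = [C_1,…,C_s]A has minimum distance exactly d(C) = min{ m·d_1, (m−1)·d_2, …, (m−s+1)·d_s }. -/
open Polynomial Matrix Finset

variable {F : Type*} [Field F]

theorem aux_card_lt {m iv : ℕ} (h : iv ≤ m) :
    ((Finset.univ : Finset (Fin m)).filter fun j : Fin m => (j : ℕ) < iv).card = iv := by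
  rw [show ((Finset.univ : Finset (Fin m)).filter fun j : Fin m => (j : ℕ) < iv)
      = (Finset.range iv).attachFin (fun a ha => lt_of_lt_of_le (Finset.mem_range.mp ha) h) by
    ext j; simp [Finset.mem_attachFin]]
  rw [Finset.card_attachFin, Finset.card_range]

theorem nsc_col_card {F : Type*} [Field F] [DecidableEq F] {s m : ℕ}
    (A : Matrix (Fin s) (Fin m) F) (hNSC : NSC A) (t : Fin s) (u : Fin s → F)
    (hut : u t ≠ 0) (hu : ∀ i, t < i → u i = 0) :
    m - (t : ℕ) ≤ ((Finset.univ : Finset (Fin m)).filter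
      fun j : Fin m => ∑ i, A i j * u i ≠ 0).card := by
  have ht' : (t : ℕ) + 1 ≤ s := t.isLt
  set f : Fin m → ℕ → F := fun j k => if h : k < s then u ⟨k, h⟩ * A ⟨k, h⟩ j else 0 with hf
  have hsum : ∀ j : Fin m,
      ∑ a : Fin ((t : ℕ) + 1), u (Fin.castLE ht' a) * A (Fin.castLE ht' a) j
        = ∑ i, A i j * u i := by
    intro j
    have h1 : ∑ i : Fin s, A i j * u i = ∑ k ∈ Finset.range s, f j k := by
      rw [← Fin.sum_univ_eq_sum_range (f j) s]
      exact Finset.sum_congr rfl fun i _ => by simp [hf, i.isLt, mul_comm]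
    have h2 : ∑ a : Fin ((t : ℕ) + 1), u (Fin.castLE ht' a) * A (Fin.castLE ht' a) j
        = ∑ k ∈ Finset.range ((t : ℕ) + 1), f j k := by
      rw [← Fin.sum_univ_eq_sum_range (f j) ((t : ℕ) + 1)]
      refine Finset.sum_congr rfl fun a _ => ?_
      have ha : (a : ℕ) < s := lt_of_lt_of_le a.isLt ht'
      simp [hf, ha, Fin.castLE]
    have h3 : ∑ k ∈ Finset.range s, f j k = ∑ k ∈ Finset.range ((t : ℕ) + 1), f j k := by
      refine (Finset.sum_subset (Finset.range_subset_range.mpr ht') ?_).symm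
      intro k hk hnk
      have hks : k < s := Finset.mem_range.mp hk
      have htk : (t : ℕ) < k := by
        by_contra hle
        exact hnk (Finset.mem_range.mpr (Nat.lt_succ_of_le (le_of_not_gt hle)))
      have : u ⟨k, hks⟩ = 0 := hu ⟨k, hks⟩ htk
      simp [hf, hks, this]
    rw [h2, ← h3, ← h1]
  set Z := (Finset.univ : Finset (Fin m)).filter
    (fun j : Fin m => ∑ i, A i j * u i = 0) with hZdef
  have hZ : Z.card ≤ (t : ℕ) := by
    by_contra hlt
    have hk : (t : ℕ) + 1 ≤ Z.card := by omega
    set e := Z.orderEmbOfCardLe hk with he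
    have hdet := hNSC ((t : ℕ) + 1) ht' (fun a => e a) e.strictMono
    set M : Matrix (Fin ((t : ℕ) + 1)) (Fin ((t : ℕ) + 1)) F :=
      Matrix.of fun a b => A (Fin.castLE ht' a) (e b) with hM
    set v : Fin ((t : ℕ) + 1) → F := fun a => u (Fin.castLE ht' a) with hv
    have hvM : v ᵥ* M = 0 := by
      funext b
      have hb : e b ∈ Z := Z.orderEmbOfCardLe_mem hk b
      rw [hZdef, Finset.mem_filter] at hb
      simp only [Matrix.vecMul, dotProduct, hM, hv, Matrix.of_apply, Pi.zero_apply]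
      rw [hsum (e b)]
      exact hb.2
    have hv0 := Matrix.eq_zero_of_vecMul_eq_zero hdet hvM
    have h0 : v (Fin.last (t : ℕ)) = 0 := by rw [hv0]; rfl
    exact hut (by
      simpa [hv, show Fin.castLE ht' (Fin.last (t : ℕ)) = t from Fin.ext rfl] using h0)
  have hsplit := Finset.card_filter_add_card_filter_not
    (s := (Finset.univ : Finset (Fin m))) (p := fun j : Fin m => ∑ i, A i j * u i = 0)
  rw [Finset.card_univ, Fintype.card_fin] at hsplit
  rw [hZdef] at hZ
  simp only [ne_eq]
  omega

theorem stmt2 {F : Type*} [Field F] [Fintype F] [DecidableEq F]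
    {s m n : ℕ} (hsm : s ≤ m) (A : Matrix (Fin s) (Fin m) F)
    (hNSC : NSC A)
    (hUT : ∀ (i : Fin s) (j : Fin m), (j : ℕ) < (i : ℕ) → A i j = 0)
    (C : Fin s → Submodule F (Fin n → F)) (k d : Fin s → ℕ)
    (hk : ∀ i, Module.finrank F (C i) = k i)
    (hC : ∀ i, C i ≠ ⊥)
    (hd : ∀ i, minDist (C i) = d i) :
    minDist (matrixProductCode A C)
      = sInf {v | ∃ i : Fin s, v = (m - (i : ℕ)) * d i} := by
  rcases Nat.eq_zero_or_pos s with hs | hs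
  · subst hs
    have hcode : ∀ x ∈ matrixProductCode A C, x = 0 := by
      rintro x ⟨c, hc, rfl⟩
      funext p
      simp
    have h1 : {w | ∃ x ∈ matrixProductCode A C, x ≠ 0 ∧ hammingNorm x = w} = ∅ := by
      ext w
      simp only [Set.mem_setOf_eq, Set.mem_empty_iff_false, iff_false]
      rintro ⟨x, hx, hxne, -⟩
      exact hxne (hcode x hx)
    have h2 : {v | ∃ i : Fin 0, v = (m - (i : ℕ)) * d i} = ∅ := by
      ext w; simp
    rw [minDist, h1, h2]
  · set S := {v | ∃ i : Fin s, v = (m - (i : ℕ)) * d i} with hS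
    have hSne : S.Nonempty := ⟨(m - ((⟨0, hs⟩ : Fin s) : ℕ)) * d ⟨0, hs⟩, ⟨0, hs⟩, rfl⟩
    have hexists : ∀ i : Fin s, ∃ c, c ∈ C i ∧ c ≠ 0 ∧ hammingNorm c = d i := by
      intro i
      obtain ⟨x0, hx0, hx0ne⟩ := (Submodule.ne_bot_iff _).mp (hC i)
      have hne : {w | ∃ x ∈ C i, x ≠ 0 ∧ hammingNorm x = w}.Nonempty :=
        ⟨hammingNorm x0, x0, hx0, hx0ne, rfl⟩
      obtain ⟨c, hc1, hc2, hc3⟩ := Nat.sInf_mem hne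
      refine ⟨c, hc1, hc2, ?_⟩
      rw [hc3, ← hd i, minDist]
    have hdiag : ∀ i : Fin s, A i ⟨(i : ℕ), lt_of_lt_of_le i.isLt hsm⟩ ≠ 0 := by
      intro i
      have ht' : (i : ℕ) + 1 ≤ s := i.isLt
      set j : Fin ((i : ℕ) + 1) → Fin m := fun a =>
        ⟨(a : ℕ), lt_of_lt_of_le (lt_of_lt_of_le a.isLt ht') hsm⟩ with hj
      have hmono : StrictMono j := fun a b hab => hab
      have hdet := hNSC ((i : ℕ) + 1) ht' j hmono
      have hBT : (Matrix.of fun a b : Fin ((i : ℕ) + 1) =>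
          A (Fin.castLE ht' a) (j b)).BlockTriangular id := by
        intro a b hba
        exact hUT _ _ hba
      rw [Matrix.det_of_upperTriangular hBT] at hdet
      exact Finset.prod_ne_zero_iff.mp hdet (Fin.last (i : ℕ)) (Finset.mem_univ _)
    have hupper : ∀ i : Fin s, ∃ x ∈ matrixProductCode A C, x ≠ 0 ∧
        hammingNorm x ≤ (m - (i : ℕ)) * d i := by
      intro i
      obtain ⟨c, hcC, hcne, hcw⟩ := hexists i
      set x : Fin m × Fin n → F := fun p => A i p.1 * c p.2 with hx
      have hxmem : x ∈ matrixProductCode A C := by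
        refine ⟨fun i' => if i' = i then c else 0, fun i' => ?_, ?_⟩
        · by_cases h : i' = i
          · subst h; simpa using hcC
          · simp [h]
        · funext p
          rw [Finset.sum_eq_single i]
          · simp [hx]
          · intro b _ hb; simp [hb]
          · intro h; exact absurd (Finset.mem_univ i) h
      obtain ⟨p0, hp0⟩ := Function.ne_iff.mp hcne
      have hxne : x ≠ 0 := by
        intro h0
        have h1 := congrFun h0 (⟨(i : ℕ), lt_of_lt_of_le i.isLt hsm⟩, p0)
        simp only [hx, Pi.zero_apply] at h1
        exact (mul_ne_zero (hdiag i) hp0) h1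
      refine ⟨x, hxmem, hxne, ?_⟩
      have hsplit : ((Finset.univ : Finset (Fin m × Fin n)).filter fun q => x q ≠ 0)
          = ((Finset.univ : Finset (Fin m)).filter fun j : Fin m => A i j ≠ 0) ×ˢ
            ((Finset.univ : Finset (Fin n)).filter fun p : Fin n => c p ≠ 0) := by
        ext ⟨j, p⟩
        simp [hx, Finset.mem_product, mul_ne_zero_iff]
      have hcardA : ((Finset.univ : Finset (Fin m)).filter fun j : Fin m => A i j ≠ 0).card
          ≤ m - (i : ℕ) := by
        have hsub : ((Finset.univ : Finset (Fin m)).filter fun j : Fin m => A i j ≠ 0)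
            ⊆ (Finset.univ : Finset (Fin m)).filter fun j : Fin m => ¬ ((j : ℕ) < (i : ℕ)) := by
          intro j hj
          rw [Finset.mem_filter] at hj ⊢
          exact ⟨hj.1, fun hlt => hj.2 (hUT i j hlt)⟩
        refine le_trans (Finset.card_le_card hsub) ?_
        have h1 := Finset.card_filter_add_card_filter_not
          (s := (Finset.univ : Finset (Fin m))) (p := fun j : Fin m => (j : ℕ) < (i : ℕ))
        rw [Finset.card_univ, Fintype.card_fin,
          aux_card_lt (le_trans (le_of_lt i.isLt) hsm)] at h1
        omega
      have hnorm : hammingNorm x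
          = ((Finset.univ : Finset (Fin m × Fin n)).filter fun q => x q ≠ 0).card := rfl
      rw [hnorm, hsplit, Finset.card_product]
      have hcardc : ((Finset.univ : Finset (Fin n)).filter fun p : Fin n => c p ≠ 0).card
          = d i := hcw
      rw [hcardc]
      exact Nat.mul_le_mul_right _ hcardA
    have hlow : ∀ x ∈ matrixProductCode A C, x ≠ 0 → sInf S ≤ hammingNorm x := by
      rintro x ⟨c, hcC, rfl⟩ hxne
      have hTne : ((Finset.univ : Finset (Fin s)).filter fun i => c i ≠ 0).Nonempty := by
        by_contra hco
        rw [Finset.not_nonempty_iff_eq_empty, Finset.filter_eq_empty_iff] at hco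
        apply hxne
        funext p
        have hz : ∀ i : Fin s, c i = 0 := fun i => not_not.mp (hco (Finset.mem_univ i))
        simp [hz]
      set t := ((Finset.univ : Finset (Fin s)).filter fun i => c i ≠ 0).max' hTne with htdef
      have htmem := Finset.max'_mem _ hTne
      rw [← htdef, Finset.mem_filter] at htmem
      have hct : c t ≠ 0 := htmem.2
      have hct0 : ∀ i, t < i → c i = 0 := by
        intro i hi
        by_contra hne
        exact absurd hi (not_lt.mpr (Finset.le_max' _ i
          (Finset.mem_filter.mpr ⟨Finset.mem_univ i, hne⟩)))
      set y : Fin m × Fin n → F := fun p => ∑ i, A i p.1 * c i p.2 with hy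
      have hfib := Finset.card_eq_sum_card_fiberwise
        (f := fun q : Fin m × Fin n => q.2)
        (s := (Finset.univ : Finset (Fin m × Fin n)).filter fun q => y q ≠ 0)
        (t := (Finset.univ : Finset (Fin n))) (fun q _ => Finset.mem_univ _)
      have hfiber : ∀ p : Fin n, c t p ≠ 0 →
          m - (t : ℕ) ≤ (((Finset.univ : Finset (Fin m × Fin n)).filter
            fun q => y q ≠ 0).filter fun q => q.2 = p).card := by
        intro p hp
        have hkey := nsc_col_card A hNSC t (fun i => c i p) hp
          (fun i hi => by show c i p = 0; rw [hct0 i hi]; rfl)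
        refine le_trans hkey ?_
        have himg : (((Finset.univ : Finset (Fin m × Fin n)).filter fun q => y q ≠ 0).filter
            fun q => q.2 = p)
          = ((Finset.univ : Finset (Fin m)).filter
              fun j : Fin m => ∑ i, A i j * c i p ≠ 0).image (fun j => (j, p)) := by
          ext ⟨j, p'⟩
          simp only [Finset.mem_filter, Finset.mem_univ, true_and, Finset.mem_image, hy]
          constructor
          · rintro ⟨h1, rfl⟩; exact ⟨j, h1, rfl⟩
          · rintro ⟨j', h1, h2⟩
            obtain ⟨rfl, rfl⟩ := Prod.mk.injEq .. |>.mp h2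
            exact ⟨h1, rfl⟩
        rw [himg, Finset.card_image_of_injective _
          (fun a b hab => ((Prod.mk.injEq _ _ _ _).mp hab).1)]
      have hsupp : d t ≤ ((Finset.univ : Finset (Fin n)).filter fun p => c t p ≠ 0).card := by
        have hmem : hammingNorm (c t) ∈ {w | ∃ z ∈ C t, z ≠ 0 ∧ hammingNorm z = w} :=
          ⟨c t, hcC t, hct, rfl⟩
        have h2 := Nat.sInf_le hmem
        rw [← minDist, hd t] at h2
        exact h2
      have hbound : d t * (m - (t : ℕ)) ≤ hammingNorm y := by
        have hnorm : hammingNorm y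
            = ((Finset.univ : Finset (Fin m × Fin n)).filter fun q => y q ≠ 0).card := rfl
        rw [hnorm, hfib]
        calc d t * (m - (t : ℕ))
            ≤ ((Finset.univ : Finset (Fin n)).filter fun p => c t p ≠ 0).card * (m - (t : ℕ)) :=
              Nat.mul_le_mul_right _ hsupp
          _ = ∑ p ∈ (Finset.univ : Finset (Fin n)).filter (fun p => c t p ≠ 0),
                (m - (t : ℕ)) := by rw [Finset.sum_const, smul_eq_mul]
          _ ≤ ∑ p ∈ (Finset.univ : Finset (Fin n)).filter (fun p => c t p ≠ 0),
                (((Finset.univ : Finset (Fin m × Fin n)).filter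
                  fun q => y q ≠ 0).filter fun q => q.2 = p).card := by
              refine Finset.sum_le_sum fun p hp => ?_
              exact hfiber p (Finset.mem_filter.mp hp).2
          _ ≤ ∑ p : Fin n, (((Finset.univ : Finset (Fin m × Fin n)).filter
                  fun q => y q ≠ 0).filter fun q => q.2 = p).card :=
              Finset.sum_le_sum_of_subset (Finset.filter_subset _ _)
      have hSle : sInf S ≤ (m - (t : ℕ)) * d t := Nat.sInf_le ⟨t, rfl⟩
      calc sInf S ≤ (m - (t : ℕ)) * d t := hSle
        _ = d t * (m - (t : ℕ)) := Nat.mul_comm _ _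
        _ ≤ hammingNorm y := hbound
    obtain ⟨i0, hi0⟩ := Nat.sInf_mem hSne
    obtain ⟨x, hxmem, hxne, hxw⟩ := hupper i0
    refine le_antisymm ?_ ?_
    · have h1 : minDist (matrixProductCode A C) ≤ hammingNorm x :=
        Nat.sInf_le ⟨x, hxmem, hxne, rfl⟩
      rw [hi0]
      exact le_trans h1 hxw
    · have hne : {w | ∃ z ∈ matrixProductCode A C, z ≠ 0 ∧ hammingNorm z = w}.Nonempty :=
        ⟨hammingNorm x, x, hxmem, hxne, rfl⟩
      obtain ⟨z, hz1, hz2, hz3⟩ := Nat.sInf_mem hne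
      calc sInf S ≤ hammingNorm z := hlow z hz1 hz2
        _ = minDist (matrixProductCode A C) := hz3
end

section
/- Let A be a non-singular s×s matrix over the finite field F_q and let C_1,…,C_s be linear codes of length n over F_q. Then the Euclidean dual of the matrix-product code satisfies ([C_1,…,C_s]A)^⊥ = [C_1^⊥,…,C_s^⊥](A^{−1})^T, where (A^{−1})^T is the transpose of the inverse of A. -/
open Polynomial Matrix Finset

variable {F : Type*} [Field F]

lemma sum4comm {α β γ δ M : Type*} [Fintype α] [Fintype β] [Fintype γ] [Fintype δ]
    [AddCommMonoid M] (f : α → β → γ → δ → M) :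
    ∑ a, ∑ b, ∑ c, ∑ d, f a b c d = ∑ c, ∑ d, ∑ a, ∑ b, f a b c d := by
  have h1 : ∀ a : α, ∑ b, ∑ c, ∑ d, f a b c d = ∑ c, ∑ d, ∑ b, f a b c d := fun a => by
    rw [Finset.sum_comm]
    exact Finset.sum_congr rfl fun c _ => Finset.sum_comm
  simp_rw [h1]
  rw [Finset.sum_comm]
  exact Finset.sum_congr rfl fun c _ => Finset.sum_comm

theorem stmt3 {F : Type*} [Field F] [Fintype F]
    {s n : ℕ} (A : Matrix (Fin s) (Fin s) F) (hA : IsUnit A.det)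
    (C : Fin s → Submodule F (Fin n → F)) :
    dualCode (matrixProductCode A C)
      = matrixProductCode (A⁻¹)ᵀ (fun i => dualCode (C i)) := by
  have hinv1 : A⁻¹ * A = 1 := Matrix.nonsing_inv_mul A hA
  have hinv2 : A * A⁻¹ = 1 := Matrix.mul_nonsing_inv A hA
  ext a
  constructor
  · intro ha
    refine ⟨fun i t => ∑ j, A i j * a (j, t), fun i c hc => ?_, ?_⟩
    · -- ∑ t, (∑ j, A i j * a (j,t)) * c t = 0
      have hb : (fun p : Fin s × Fin n => A i p.1 * c p.2) ∈ matrixProductCode A C := by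
        refine ⟨fun k => if h : k = i then c else 0, fun k => ?_, ?_⟩
        · by_cases h : k = i
          · subst h; simpa using hc
          · simp [h, Submodule.zero_mem]
        · funext p
          rw [Finset.sum_eq_single i]
          · simp
          · intro k _ hk; simp [hk]
          · simp
      have h0 := ha _ hb
      rw [Fintype.sum_prod_type] at h0
      rw [← h0, Finset.sum_comm]
      apply Finset.sum_congr rfl
      intro j _
      rw [Finset.sum_mul]
      apply Finset.sum_congr rfl
      intro t _
      ring
    · funext p
      have : ∀ j, ((A⁻¹ * A) p.1 j) = (1 : Matrix (Fin s) (Fin s) F) p.1 j := fun j => by rw [hinv1]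
      calc a p = ∑ j, (1 : Matrix (Fin s) (Fin s) F) p.1 j * a (j, p.2) := by
              rw [Finset.sum_eq_single p.1] <;> simp +contextual [Matrix.one_apply, eq_comm]
        _ = ∑ j, (∑ i, A⁻¹ p.1 i * A i j) * a (j, p.2) := by
              simp_rw [← Matrix.mul_apply, hinv1]
        _ = ∑ i, (A⁻¹)ᵀ i p.1 * ∑ j, A i j * a (j, p.2) := by
              simp_rw [Finset.sum_mul, Matrix.transpose_apply, Finset.mul_sum]
              rw [Finset.sum_comm]
              apply Finset.sum_congr rfl; intro i _
              apply Finset.sum_congr rfl; intro j _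
              ring
  · rintro ⟨d, hd, rfl⟩ b ⟨c, hc, rfl⟩
    -- ∑ p, (∑ i, (A⁻¹)ᵀ i p.1 * d i p.2) * (∑ k, A k p.1 * c k p.2) = 0
    have key : ∑ p : Fin s × Fin n, (∑ i, (A⁻¹)ᵀ i p.1 * d i p.2) * (∑ k, A k p.1 * c k p.2)
        = ∑ i, ∑ k, (A * A⁻¹) k i * ∑ t, d i t * c k t := by
      rw [Fintype.sum_prod_type]
      simp_rw [Matrix.mul_apply, Matrix.transpose_apply, Finset.sum_mul, Finset.mul_sum]
      rw [sum4comm]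
      refine Finset.sum_congr rfl fun i _ => Finset.sum_congr rfl fun k _ => ?_
      refine Finset.sum_congr rfl fun j _ => Finset.sum_congr rfl fun t _ => ?_
      ring
    rw [key, hinv2]
    apply Finset.sum_eq_zero
    intro i _
    rw [Finset.sum_eq_single i]
    · simp [hd i _ (hc i)]
    · intro k _ hk; simp [Matrix.one_apply, hk]
    · simp
end

section
/- Let A be an s×s matrix over the finite field F_q that is non-singular by columns (NSC), and let C_1,…,C_s be linear codes of length n over F_q. Then the Euclidean dual C^⊥ of the matrix-product code C = [C_1,…,C_s]A has minimum distance d(C^⊥) ≥ min{ s·d(C_s^⊥), (s−1)·d(C_{s−1}^⊥), …, 1·d(C_1^⊥) }. -/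
open Polynomial Matrix Finset

variable {F : Type*} [Field F]

set_option linter.unusedSectionVars false

section Aux
variable {F : Type*} [Field F] [DecidableEq F]

lemma mem_dualCode' {ι : Type*} [Fintype ι] (C : Submodule F (ι → F)) (a : ι → F) :
    a ∈ dualCode C ↔ ∀ b ∈ C, ∑ i, a i * b i = 0 := Iff.rfl

/-- Key NSC lemma: if `A *ᵥ v` vanishes below `i` and `v ≠ 0`, then `v` has weight `≥ i+1`. -/
lemma nsc_weight {s : ℕ} {A : Matrix (Fin s) (Fin s) F} (hNSC : NSC A)
    {v : Fin s → F} (hv : v ≠ 0) {i : Fin s}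
    (h0 : ∀ r : Fin s, r < i → A.mulVec v r = 0) :
    (i : ℕ) + 1 ≤ hammingNorm v := by
  by_contra hlt
  push_neg at hlt
  set J : Finset (Fin s) := Finset.univ.filter (fun j => v j ≠ 0) with hJdef
  have hcard : hammingNorm v = J.card := rfl
  have hwi : J.card ≤ (i : ℕ) := by omega
  have hws : J.card ≤ s := hwi.trans i.isLt.le
  set j : Fin J.card → Fin s := fun b => J.orderEmbOfFin rfl b with hjdef
  have hjmem : ∀ b, j b ∈ J := fun b => J.orderEmbOfFin_mem rfl b
  have hmono : StrictMono j := (J.orderEmbOfFin rfl).strictMono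
  have hdet := hNSC J.card hws j hmono
  have hu : (fun b => v (j b)) = 0 := by
    apply Matrix.eq_zero_of_mulVec_eq_zero hdet
    funext a
    have hsum : ((Matrix.of fun a b : Fin J.card => A (Fin.castLE hws a) (j b)).mulVec
        (fun b => v (j b))) a = ∑ c ∈ J, A (Fin.castLE hws a) c * v c := by
      show ∑ b, A (Fin.castLE hws a) (j b) * v (j b) = _
      exact Finset.sum_bij (fun b _ => j b) (fun b _ => hjmem b)
        (fun b _ b' _ h => hmono.injective h)
        (fun c hc => by
          have : c ∈ Set.range j := by rw [hjdef]; rw [Finset.range_orderEmbOfFin]; exact hc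
          obtain ⟨b, rfl⟩ := this; exact ⟨b, Finset.mem_univ b, rfl⟩)
        (fun b _ => rfl)
    have hfull : ∑ c ∈ J, A (Fin.castLE hws a) c * v c
        = ∑ c, A (Fin.castLE hws a) c * v c := by
      apply Finset.sum_subset (Finset.subset_univ J)
      intro c _ hc
      have : v c = 0 := by
        by_contra h; exact hc (Finset.mem_filter.mpr ⟨Finset.mem_univ c, h⟩)
      rw [this, mul_zero]
    have hcast : (Fin.castLE hws a : Fin s) < i := by
      rw [Fin.lt_def]
      exact lt_of_lt_of_le a.isLt hwi
    rw [hsum, hfull]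
    exact h0 _ hcast
  apply hv
  funext c
  by_cases hc : c ∈ J
  · have : c ∈ Set.range j := by rw [hjdef]; rw [Finset.range_orderEmbOfFin]; exact hc
    obtain ⟨b, rfl⟩ := this
    exact congrFun hu b
  · by_contra h
    exact hc (Finset.mem_filter.mpr ⟨Finset.mem_univ c, h⟩)

lemma mem_dual_mpc {s n : ℕ} (A : Matrix (Fin s) (Fin s) F)
    (C : Fin s → Submodule F (Fin n → F)) (x : Fin s × Fin n → F) :
    x ∈ dualCode (matrixProductCode A C) ↔
      ∀ i, (fun t => ∑ j, A i j * x (j, t)) ∈ dualCode (C i) := by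
  constructor
  · intro h i
    rw [mem_dualCode']
    intro c hc
    have hb : (fun p : Fin s × Fin n => A i p.1 * c p.2) ∈ matrixProductCode A C := by
      refine ⟨Pi.single i c, fun r => ?_, funext fun p => ?_⟩
      · by_cases hr : r = i
        · subst hr; rw [Pi.single_eq_same]; exact hc
        · rw [Pi.single_eq_of_ne hr]; exact (C r).zero_mem
      · rw [Finset.sum_eq_single i (fun r _ hr => by rw [Pi.single_eq_of_ne hr]; simp)
          (fun h => absurd (Finset.mem_univ i) h)]
        rw [Pi.single_eq_same]
    have H := h _ hb
    calc ∑ t, (∑ j, A i j * x (j, t)) * c t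
        = ∑ t, ∑ j, x (j, t) * (A i j * c t) := by
          refine Finset.sum_congr rfl fun t _ => ?_
          rw [Finset.sum_mul]
          exact Finset.sum_congr rfl fun j _ => by ring
      _ = ∑ j, ∑ t, x (j, t) * (A i j * c t) := Finset.sum_comm
      _ = ∑ p : Fin s × Fin n, x p * (A i p.1 * c p.2) :=
          (Fintype.sum_prod_type (fun p : Fin s × Fin n => x p * (A i p.1 * c p.2))).symm
      _ = 0 := H
  · intro h
    rw [mem_dualCode']
    rintro b ⟨c, hc, rfl⟩
    calc ∑ p : Fin s × Fin n, x p * ∑ r, A r p.1 * c r p.2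
        = ∑ p : Fin s × Fin n, ∑ r, x p * (A r p.1 * c r p.2) := by
          exact Finset.sum_congr rfl fun p _ => Finset.mul_sum _ _ _
      _ = ∑ r, ∑ p : Fin s × Fin n, x p * (A r p.1 * c r p.2) := Finset.sum_comm
      _ = ∑ r : Fin s, (0 : F) := ?_
      _ = 0 := by simp
    refine Finset.sum_congr rfl fun r _ => ?_
    have H := (mem_dualCode' _ _).mp (h r) (c r) (hc r)
    calc ∑ p : Fin s × Fin n, x p * (A r p.1 * c r p.2)
        = ∑ j, ∑ t, x (j, t) * (A r j * c r t) :=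
          Fintype.sum_prod_type (fun p : Fin s × Fin n => x p * (A r p.1 * c r p.2))
      _ = ∑ t, ∑ j, x (j, t) * (A r j * c r t) := Finset.sum_comm
      _ = ∑ t, (∑ j, A r j * x (j, t)) * c r t := by
          refine Finset.sum_congr rfl fun t _ => ?_
          rw [Finset.sum_mul]
          exact Finset.sum_congr rfl fun j _ => by ring
      _ = 0 := H

lemma hammingNorm_prod {s n : ℕ} (x : Fin s × Fin n → F) :
    hammingNorm x = ∑ t : Fin n, hammingNorm (fun j => x (j, t)) := by
  show (Finset.univ.filter (fun p : Fin s × Fin n => x p ≠ 0)).card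
    = ∑ t : Fin n, (Finset.univ.filter (fun j : Fin s => x (j, t) ≠ 0)).card
  rw [Finset.card_filter]
  rw [Fintype.sum_prod_type_right]
  exact Finset.sum_congr rfl fun t _ => (Finset.card_filter _ _).symm

end Aux

theorem stmt4 {F : Type*} [Field F] [Fintype F] [DecidableEq F]
    {s n : ℕ} (A : Matrix (Fin s) (Fin s) F) (hNSC : NSC A)
    (C : Fin s → Submodule F (Fin n → F)) :
    sInf {v | ∃ i : Fin s, v = ((i : ℕ) + 1) * minDist (dualCode (C i))}
      ≤ minDist (dualCode (matrixProductCode A C)) := by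
  set S := {d | ∃ x ∈ dualCode (matrixProductCode A C), x ≠ 0 ∧ hammingNorm x = d} with hSdef
  have hRHS : minDist (dualCode (matrixProductCode A C)) = sInf S := rfl
  rw [hRHS]
  have hdetA : A.det ≠ 0 := by
    have h := hNSC s le_rfl (fun b => b) strictMono_id
    have he : (Matrix.of fun a b : Fin s => A (Fin.castLE le_rfl a) b) = A := by
      ext a b; rfl
    rwa [he] at h
  by_cases hS : S.Nonempty
  · obtain ⟨x, hxmem, hx0, hxd⟩ := Nat.sInf_mem hS
    rw [← hxd]
    set y : Fin s → Fin n → F := fun i t => ∑ j, A i j * x (j, t) with hydef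
    have hymem : ∀ i, y i ∈ dualCode (C i) := (mem_dual_mpc A C x).mp hxmem
    set T : Finset (Fin s) := Finset.univ.filter (fun i => y i ≠ 0) with hTdef
    have hT : T.Nonempty := by
      by_contra hT
      apply hx0
      have hy0 : ∀ i, y i = 0 := by
        intro i
        by_contra h
        exact hT ⟨i, Finset.mem_filter.mpr ⟨Finset.mem_univ i, h⟩⟩
      funext p
      have hcol : (fun j => x (j, p.2)) = 0 := by
        apply Matrix.eq_zero_of_mulVec_eq_zero hdetA
        funext r
        show ∑ j, A r j * x (j, p.2) = 0
        exact congrFun (hy0 r) p.2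
      exact congrFun hcol p.1
    set i : Fin s := T.min' hT with hidef
    have hiT : i ∈ T := T.min'_mem hT
    have hyine : y i ≠ 0 := (Finset.mem_filter.mp hiT).2
    have hylt : ∀ r : Fin s, r < i → y r = 0 := by
      intro r hr
      by_contra h
      exact absurd (T.min'_le r (Finset.mem_filter.mpr ⟨Finset.mem_univ r, h⟩))
        (not_le.mpr hr)
    have h2 : minDist (dualCode (C i)) ≤ hammingNorm (y i) :=
      Nat.sInf_le ⟨y i, hymem i, hyine, rfl⟩
    have h3 : ((i : ℕ) + 1) * hammingNorm (y i) ≤ hammingNorm x := by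
      set U : Finset (Fin n) := Finset.univ.filter (fun t => y i t ≠ 0) with hUdef
      have hUcard : hammingNorm (y i) = U.card := rfl
      have hcol : ∀ t ∈ U, (i : ℕ) + 1 ≤ hammingNorm (fun j => x (j, t)) := by
        intro t ht
        have hynt : y i t ≠ 0 := (Finset.mem_filter.mp ht).2
        have hvne : (fun j => x (j, t)) ≠ 0 := by
          intro h
          apply hynt
          show ∑ j, A i j * x (j, t) = 0
          apply Finset.sum_eq_zero
          intro j _
          rw [show x (j, t) = 0 from congrFun h j, mul_zero]
        exact nsc_weight hNSC hvne (fun r hr => by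
          show ∑ j, A r j * x (j, t) = 0
          exact congrFun (hylt r hr) t)
      calc ((i : ℕ) + 1) * hammingNorm (y i) = ∑ _t ∈ U, ((i : ℕ) + 1) := by
            rw [hUcard, Finset.sum_const, smul_eq_mul, mul_comm]
        _ ≤ ∑ t ∈ U, hammingNorm (fun j => x (j, t)) := Finset.sum_le_sum hcol
        _ ≤ ∑ t : Fin n, hammingNorm (fun j => x (j, t)) :=
            Finset.sum_le_sum_of_subset (Finset.subset_univ U)
        _ = hammingNorm x := (hammingNorm_prod x).symm
    have h1 : sInf {v | ∃ i : Fin s, v = ((i : ℕ) + 1) * minDist (dualCode (C i))}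
        ≤ ((i : ℕ) + 1) * minDist (dualCode (C i)) := Nat.sInf_le ⟨i, rfl⟩
    have h4 : ((i : ℕ) + 1) * minDist (dualCode (C i))
        ≤ ((i : ℕ) + 1) * hammingNorm (y i) := Nat.mul_le_mul_left _ h2
    exact le_trans h1 (le_trans h4 h3)
  · rw [Set.not_nonempty_iff_eq_empty] at hS
    rcases Nat.eq_zero_or_pos s with hs | hs
    · subst hs
      have he : {v | ∃ i : Fin 0, v = ((i : ℕ) + 1) * minDist (dualCode (C i))} = ∅ :=
        Set.eq_empty_iff_forall_notMem.mpr (fun v ⟨i, _⟩ => i.elim0)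
      rw [he, Nat.sInf_empty]
      exact Nat.zero_le _
    · set i0 : Fin s := ⟨0, hs⟩ with hi0
      have hD : {d | ∃ a ∈ dualCode (C i0), a ≠ 0 ∧ hammingNorm a = d} = ∅ := by
        ext d
        simp only [Set.mem_setOf_eq, Set.mem_empty_iff_false, iff_false, not_exists]
        rintro a ⟨ha, ha0, rfl⟩
        set x : Fin s × Fin n → F := fun p => A⁻¹ p.1 i0 * a p.2 with hxdef
        have hAinv : A * A⁻¹ = 1 := Matrix.mul_nonsing_inv A (isUnit_iff_ne_zero.mpr hdetA)
        have key : ∀ (i : Fin s) (t : Fin n), ∑ j, A i j * x (j, t)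
            = (1 : Matrix (Fin s) (Fin s) F) i i0 * a t := by
          intro i t
          calc ∑ j, A i j * x (j, t) = (∑ j, A i j * A⁻¹ j i0) * a t := by
                rw [Finset.sum_mul]
                exact Finset.sum_congr rfl fun j _ => by
                  show A i j * (A⁻¹ j i0 * a t) = _; ring
            _ = (A * A⁻¹) i i0 * a t := by rw [Matrix.mul_apply]
            _ = _ := by rw [hAinv]
        have hxmem : x ∈ dualCode (matrixProductCode A C) := by
          rw [mem_dual_mpc]
          intro i
          by_cases hi : i = i0
          · subst hi
            have hfa : (fun t => ∑ j, A i0 j * x (j, t)) = a := funext fun t => by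
              rw [key, Matrix.one_apply_eq, one_mul]
            rw [hfa]; exact ha
          · have hf0 : (fun t => ∑ j, A i j * x (j, t)) = 0 := funext fun t => by
              rw [key, Matrix.one_apply_ne hi, zero_mul]; rfl
            rw [hf0]; exact Submodule.zero_mem _
        have hx0 : x ≠ 0 := by
          obtain ⟨t0, ht0⟩ := Function.ne_iff.mp ha0
          intro h
          apply ht0
          have hk := key i0 t0
          rw [Matrix.one_apply_eq, one_mul] at hk
          rw [← hk]
          apply Finset.sum_eq_zero
          intro j _
          rw [show x (j, t0) = 0 from congrFun h (j, t0), mul_zero]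
        have hmem : hammingNorm x ∈ S := ⟨x, hxmem, hx0, rfl⟩
        rw [hS] at hmem
        exact hmem
      have hmd : minDist (dualCode (C i0)) = 0 := by
        unfold minDist; rw [hD, Nat.sInf_empty]
      have hle : sInf {v | ∃ i : Fin s, v = ((i : ℕ) + 1) * minDist (dualCode (C i))} ≤ 0 :=
        Nat.sInf_le ⟨i0, by rw [hmd, mul_zero]⟩
      exact le_trans hle (Nat.zero_le _)
end

section
/- Let C be a cyclic code of length n over the finite field F_q with generator polynomial g_1(x) (the monic divisor of x^n − 1 generating C). Then C is an LCD code if and only if g_1(x) is self-reciprocal (i.e., its monic reciprocal polynomial equals g_1(x)) and every monic irreducible factor of g_1(x) has the same multiplicity in g_1(x) as in x^n − 1. -/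
open Polynomial Matrix Finset

variable {F : Type*} [Field F]

section dev
variable {F : Type*} [Field F]

noncomputable def tp (n : ℕ) (b : Fin n → F) : F[X] := ∑ i : Fin n, Polynomial.C (b i) * Polynomial.X ^ (i : ℕ)

lemma coeff_tp (n : ℕ) (b : Fin n → F) (j : ℕ) :
    (tp n b).coeff j = if h : j < n then b ⟨j, h⟩ else 0 := by
  rw [tp, finset_sum_coeff]
  simp only [coeff_C_mul, coeff_X_pow, mul_ite, mul_one, mul_zero]
  split
  · next h =>
    rw [Finset.sum_eq_single (⟨j, h⟩ : Fin n)]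
    · simp
    · intro i _ hi
      rw [if_neg]
      intro hij
      exact hi (Fin.ext hij.symm)
    · simp
  · next h =>
    apply Finset.sum_eq_zero
    intro i _
    rw [if_neg]
    omega

lemma natDegree_tp_lt (n : ℕ) (hn : 0 < n) (b : Fin n → F) : (tp n b).natDegree < n := by
  have : (tp n b).natDegree ≤ n - 1 := by
    apply natDegree_sum_le_of_forall_le
    intro i _
    apply (natDegree_C_mul_le _ _).trans
    simp only [natDegree_X_pow]
    omega
  omega

lemma tp_coeff (n : ℕ) (p : F[X]) (hp : p.natDegree < n) :
    tp n (fun i : Fin n => p.coeff i) = p := by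
  ext j
  rw [coeff_tp]
  split
  · rfl
  · next h => exact (coeff_eq_zero_of_natDegree_lt (by omega)).symm

lemma tp_eq_zero_iff (n : ℕ) (b : Fin n → F) : tp n b = 0 ↔ b = 0 := by
  constructor
  · intro h
    funext i
    have := coeff_tp n b i
    rw [h] at this
    simpa [i.isLt] using this.symm
  · rintro rfl; simp [tp]

lemma reflect_reflect (N : ℕ) (p : F[X]) : reflect N (reflect N p) = p := by
  ext i
  rw [coeff_reflect, coeff_reflect, revAt_invol]

lemma natDegree_reflect_le {N : ℕ} {p : F[X]} (h : p.natDegree ≤ N) :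
    (reflect N p).natDegree ≤ N := by
  apply natDegree_le_iff_coeff_eq_zero.mpr
  intro i hi
  rw [coeff_reflect, revAt_eq_self_of_lt hi]
  exact coeff_eq_zero_of_natDegree_lt (by omega)

lemma pairing (n : ℕ) (hn : 0 < n) (a b : Fin n → F) :
    ∑ i, a i * b i = ((tp n a) * reflect (n-1) (tp n b)).coeff (n-1) := by
  rw [coeff_mul, Finset.Nat.sum_antidiagonal_eq_sum_range_succ_mk]
  have hn1 : n - 1 + 1 = n := by omega
  rw [Nat.succ_eq_add_one, hn1, ← Fin.sum_univ_eq_sum_range]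
  apply Finset.sum_congr rfl
  intro i _
  rw [coeff_tp, coeff_reflect,
    revAt_le (by omega : n - 1 - (i:ℕ) ≤ n - 1), coeff_tp]
  have h1 : (i:ℕ) < n := i.isLt
  rw [dif_pos h1, dif_pos (by omega : n - 1 - (n - 1 - (i:ℕ)) < n)]
  have h2 : n - 1 - (n - 1 - (i:ℕ)) = (i:ℕ) := by omega
  simp only [h2, Fin.eta]


noncomputable def mrec (f : F[X]) : F[X] := Polynomial.C (f.coeff 0)⁻¹ * f.reverse

lemma Xn_coeff0 {n : ℕ} (hn : 0 < n) : (X^n - 1 : F[X]).coeff 0 = -1 := by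
  simp [coeff_X_pow]
  omega

lemma Xn_monic {n : ℕ} (hn : 0 < n) : (X^n - 1 : F[X]).Monic := by
  have := monic_X_pow_sub_C (1 : F) hn.ne'
  simpa using this

lemma Xn_natDegree {n : ℕ} (hn : 0 < n) : (X^n - 1 : F[X]).natDegree = n := by
  have := natDegree_X_pow_sub_C (R := F) (n := n) (r := 1)
  simpa using this

lemma mrec_natDegree {f : F[X]} (hf0 : f.coeff 0 ≠ 0) : (mrec f).natDegree = f.natDegree := by
  rw [mrec, natDegree_C_mul (inv_ne_zero hf0), reverse_natDegree,
    natTrailingDegree_eq_zero.mpr (Or.inr hf0), Nat.sub_zero]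

lemma trailingCoeff_eq_coeff_zero {f : F[X]} (hf0 : f.coeff 0 ≠ 0) : f.trailingCoeff = f.coeff 0 := by
  rw [trailingCoeff, natTrailingDegree_eq_zero.mpr (Or.inr hf0)]

lemma mrec_monic {f : F[X]} (hf0 : f.coeff 0 ≠ 0) : (mrec f).Monic := by
  rw [Monic, mrec, leadingCoeff_mul, leadingCoeff_C, reverse_leadingCoeff,
    _root_.trailingCoeff_eq_coeff_zero hf0, inv_mul_cancel₀ hf0]

lemma mrec_ne_zero {f : F[X]} (hf0 : f.coeff 0 ≠ 0) : mrec f ≠ 0 :=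
  (mrec_monic hf0).ne_zero

lemma reflect_mrec (f : F[X]) : reflect f.natDegree (mrec f) = Polynomial.C (f.coeff 0)⁻¹ * f := by
  rw [mrec, reflect_C_mul]
  congr 1
  exact reflect_reflect _ f

lemma reverse_eq_mrec {f : F[X]} (hf0 : f.coeff 0 ≠ 0) :
    f.reverse = Polynomial.C (f.coeff 0) * mrec f := by
  rw [mrec, ← mul_assoc, ← _root_.map_mul, mul_inv_cancel₀ hf0, _root_.map_one, one_mul]

lemma mrec_mul {f₁ f₂ : F[X]} : mrec (f₁ * f₂) = mrec f₁ * mrec f₂ := by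
  rw [mrec, mrec, mrec, mul_coeff_zero, reverse_mul_of_domain, mul_inv, _root_.map_mul]
  ring

lemma mrec_Xn {n : ℕ} (hn : 0 < n) : mrec (X^n - 1 : F[X]) = X^n - 1 := by
  have hrev : (X^n - 1 : F[X]).reverse = 1 - X^n := by
    rw [reverse, Xn_natDegree hn, reflect_sub, reflect_monomial]
    have h1 : (1 : F[X]) = X^0 := by simp
    rw [h1, reflect_monomial, revAt_le (le_refl n), revAt_le (Nat.zero_le n)]
    simp
  rw [mrec, hrev, Xn_coeff0 hn, inv_neg, inv_one, _root_.map_neg, _root_.map_one]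
  ring


section context
variable {n : ℕ} {g h : F[X]}

lemma mem_cyclic {b : Fin n → F} : b ∈ cyclicCode n g ↔ g ∣ tp n b := Iff.rfl

lemma mem_dual_def {b : Fin n → F} {C : Submodule F (Fin n → F)} :
    b ∈ dualCode C ↔ ∀ c ∈ C, ∑ i, b i * c i = 0 := Iff.rfl

lemma h_monic (hn : 0 < n) (hg : g.Monic) (hgh : g * h = X^n - 1) : h.Monic :=
  hg.of_mul_monic_left (hgh ▸ Xn_monic hn)

lemma deg_add (hn : 0 < n) (hg : g.Monic) (hgh : g * h = X^n - 1) :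
    g.natDegree + h.natDegree = n := by
  have hh := h_monic hn hg hgh
  rw [← natDegree_mul hg.ne_zero hh.ne_zero, hgh, Xn_natDegree hn]

lemma coeff0_mul (hn : 0 < n) (hgh : g * h = X^n - 1) :
    g.coeff 0 * h.coeff 0 = -1 := by
  rw [← mul_coeff_zero, hgh, Xn_coeff0 hn]

lemma mem_dual (hn : 0 < n) (hg : g.Monic) (hgh : g * h = X^n - 1)
    (hk : 0 < g.natDegree) (b : Fin n → F) :
    b ∈ dualCode (cyclicCode n g) ↔ mrec h ∣ tp n b := by
  have hh := h_monic hn hg hgh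
  have hdeg := deg_add hn hg hgh
  have hc0 := coeff0_mul hn hgh
  have hg0 : g.coeff 0 ≠ 0 := by
    intro e; rw [e, zero_mul] at hc0; exact absurd hc0.symm (by norm_num)
  have hh0 : h.coeff 0 ≠ 0 := by
    intro e; rw [e, mul_zero] at hc0; exact absurd hc0.symm (by norm_num)
  have hhd : h.natDegree = n - g.natDegree := by omega
  have hBdeg : (tp n b).natDegree < n := natDegree_tp_lt n hn b
  have hmonX : (X^n - 1 : F[X]).Monic := Xn_monic hn
  constructor
  · intro hd
    have hstep : ∀ i, g.natDegree ≤ i → i ≤ n - 1 →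
        (g * reflect (n-1) (tp n b)).coeff i = 0 := by
      intro i hki hin
      have hdegj : (g * X ^ (n - 1 - i)).natDegree < n := by
        rw [natDegree_mul hg.ne_zero (pow_ne_zero _ X_ne_zero), natDegree_X_pow]
        omega
      have hmem : (fun i' : Fin n => (g * X ^ (n - 1 - i)).coeff i') ∈ cyclicCode n g := by
        rw [mem_cyclic, tp_coeff n _ hdegj]
        exact Dvd.intro _ rfl
      have hz := hd _ hmem
      have hz' : ∑ i', (fun i' : Fin n => (g * X ^ (n - 1 - i)).coeff i') i' * b i' = 0 := by
        rw [← hz]; exact Finset.sum_congr rfl (fun _ _ => mul_comm _ _)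
      rw [pairing n hn, tp_coeff n _ hdegj] at hz'
      have hrw : (g * X ^ (n - 1 - i) * reflect (n-1) (tp n b)).coeff (n-1)
           = (g * reflect (n-1) (tp n b)).coeff (n - 1 - (n - 1 - i)) := by
        rw [show g * X ^ (n-1-i) * reflect (n-1) (tp n b)
            = (g * reflect (n-1) (tp n b)) * X ^ (n-1-i) by ring,
          coeff_mul_X_pow', if_pos (by omega)]
      rw [hrw, show n - 1 - (n - 1 - i) = i by omega] at hz'
      exact hz'
    have hPdeg : (g * reflect (n-1) (tp n b)).natDegree ≤ g.natDegree + (n-1) :=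
      le_trans natDegree_mul_le (by
        have := natDegree_reflect_le (p := tp n b) (N := n-1) (by omega)
        omega)
    have hQdeg : ((g * reflect (n-1) (tp n b)) /ₘ (X^n - 1)).natDegree ≤ g.natDegree - 1 := by
      rw [natDegree_divByMonic _ hmonX, Xn_natDegree hn]; omega
    have hPQR : (g * reflect (n-1) (tp n b)) %ₘ (X^n - 1)
        = g * reflect (n-1) (tp n b) - (X^n-1) * ((g * reflect (n-1) (tp n b)) /ₘ (X^n - 1)) := by
      have h1 := modByMonic_add_div (g * reflect (n-1) (tp n b)) (X^n - 1)
      linear_combination h1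
    have hRco : ∀ i, g.natDegree ≤ i → ((g * reflect (n-1) (tp n b)) %ₘ (X^n - 1)).coeff i = 0 := by
      intro i hki
      by_cases hin : i ≤ n - 1
      · rw [hPQR, coeff_sub, hstep i hki hin,
          show (X^n - 1) * ((g * reflect (n-1) (tp n b)) /ₘ (X^n - 1))
            = ((g * reflect (n-1) (tp n b)) /ₘ (X^n - 1)) * X^n
              - ((g * reflect (n-1) (tp n b)) /ₘ (X^n - 1)) by ring,
          coeff_sub, coeff_mul_X_pow', if_neg (by omega),
          coeff_eq_zero_of_natDegree_lt (by omega)]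
        ring
      · apply coeff_eq_zero_of_degree_lt
        calc ((g * reflect (n-1) (tp n b)) %ₘ (X^n - 1)).degree
            < (X^n - 1 : F[X]).degree := degree_modByMonic_lt _ hmonX
          _ ≤ (i : WithBot ℕ) := by
              rw [degree_eq_natDegree hmonX.ne_zero, Xn_natDegree hn]
              exact_mod_cast (by omega : n ≤ i)
    have hgR : g ∣ (g * reflect (n-1) (tp n b)) %ₘ (X^n - 1) := by
      rw [hPQR]
      exact dvd_sub (Dvd.intro _ rfl) ⟨h * ((g * reflect (n-1) (tp n b)) /ₘ (X^n - 1)),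
        by rw [← mul_assoc, hgh]⟩
    have hR0 : (g * reflect (n-1) (tp n b)) %ₘ (X^n - 1) = 0 := by
      by_contra h0
      have h1 := natDegree_le_of_dvd hgR h0
      have h2 := hRco _ h1
      exact (mt leadingCoeff_eq_zero.mp h0) h2
    have hPeq : g * reflect (n-1) (tp n b)
        = (X^n - 1) * ((g * reflect (n-1) (tp n b)) /ₘ (X^n - 1)) := by
      conv_lhs => rw [← modByMonic_add_div (g * reflect (n-1) (tp n b)) (X^n - 1)]
      rw [hR0, zero_add]
    have hBrefl : reflect (n-1) (tp n b) = h * ((g * reflect (n-1) (tp n b)) /ₘ (X^n - 1)) := by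
      apply mul_left_cancel₀ hg.ne_zero
      linear_combination hPeq - ((g * reflect (n-1) (tp n b)) /ₘ (X^n - 1)) * hgh
    have hBeq : tp n b = reflect (n-1) (h * ((g * reflect (n-1) (tp n b)) /ₘ (X^n - 1))) := by
      rw [← hBrefl, _root_.reflect_reflect]
    rcases eq_or_ne ((g * reflect (n-1) (tp n b)) /ₘ (X^n - 1)) 0 with hQ0 | hQ0
    · rw [hBeq, hQ0, mul_zero]
      simp
    · have h2 := reflect_mul h ((g * reflect (n-1) (tp n b)) /ₘ (X^n - 1))
        (by omega : h.natDegree ≤ n - g.natDegree) hQdeg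
      rw [show n - g.natDegree + (g.natDegree - 1) = n-1 by omega] at h2
      rw [hBeq, h2, show reflect (n - g.natDegree) h = reverse h by rw [reverse, hhd],
        reverse_eq_mrec hh0]
      exact ⟨Polynomial.C (h.coeff 0) * reflect (g.natDegree - 1)
        ((g * reflect (n-1) (tp n b)) /ₘ (X^n - 1)), by ring⟩
  · rintro ⟨s, hs⟩
    rw [mem_dual_def]
    intro c hc
    obtain ⟨m, hm⟩ := (mem_cyclic).mp hc
    rw [show ∑ i, b i * c i = ∑ i, c i * b i from
      Finset.sum_congr rfl (fun _ _ => mul_comm _ _), pairing n hn]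
    have hdvd : h ∣ reflect (n-1) (tp n b) := by
      rcases eq_or_ne s 0 with h0 | h0
      · rw [hs, h0, mul_zero]
        simp
      · have hmd : (mrec h).natDegree = n - g.natDegree := by rw [mrec_natDegree hh0, hhd]
        have hsdeg : s.natDegree ≤ g.natDegree - 1 := by
          have h1 : (tp n b).natDegree < n := hBdeg
          rw [hs, natDegree_mul (mrec_ne_zero hh0) h0, hmd] at h1
          omega
        have hre := reflect_mul (mrec h) s (le_of_eq hmd) hsdeg
        rw [show n - g.natDegree + (g.natDegree - 1) = n-1 by omega] at hre
        rw [hs, hre, show reflect (n - g.natDegree) (mrec h)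
            = Polynomial.C (h.coeff 0)⁻¹ * h by rw [← hhd, reflect_mrec]]
        exact ⟨Polynomial.C (h.coeff 0)⁻¹ * reflect (g.natDegree - 1) s, by ring⟩
    obtain ⟨Q, hQ⟩ := hdvd
    rw [hm, hQ, show g * m * (h * Q) = (X^n - 1) * (m * Q) by rw [← hgh]; ring]
    rcases eq_or_ne (m * Q) 0 with ht0 | ht0
    · rw [ht0, mul_zero, coeff_zero]
    · have hm0 : m ≠ 0 := left_ne_zero_of_mul ht0
      have hQ0 : Q ≠ 0 := right_ne_zero_of_mul ht0
      have hm1 : g.natDegree + m.natDegree < n := by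
        have h1 : (tp n c).natDegree < n := natDegree_tp_lt n hn c
        rwa [hm, natDegree_mul hg.ne_zero hm0] at h1
      have hQ1 : h.natDegree + Q.natDegree ≤ n - 1 := by
        have h1 : (reflect (n-1) (tp n b)).natDegree ≤ n - 1 := natDegree_reflect_le (by omega)
        rwa [hQ, natDegree_mul hh.ne_zero hQ0] at h1
      have hmQ : (m*Q).natDegree ≤ m.natDegree + Q.natDegree := natDegree_mul_le
      rw [show ((X^n - 1) * (m*Q) : F[X]) = (m*Q) * X^n - (m*Q) by ring,
        coeff_sub, coeff_mul_X_pow', if_neg (by omega),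
        coeff_eq_zero_of_natDegree_lt (by omega)]
      ring

lemma assoc_natDegree {p q : F[X]} (hpq : Associated p q) (hq : q ≠ 0) :
    p.natDegree = q.natDegree := by
  obtain ⟨u, hu⟩ := hpq
  have hp : p ≠ 0 := fun e => hq (by rw [← hu, e, zero_mul])
  rw [← hu, natDegree_mul hp (fun e => hq (by rw [← hu, e, mul_zero])),
    natDegree_eq_zero_of_isUnit u.isUnit, Nat.add_zero]

lemma lcd_iff (hn : 0 < n) (hg : g.Monic) (hgh : g * h = X^n - 1)
    (hk : 0 < g.natDegree) :
    IsLCD (cyclicCode n g) ↔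
      ∀ B : F[X], B.natDegree < n → g ∣ B → mrec h ∣ B → B = 0 := by
  rw [IsLCD, Submodule.eq_bot_iff]
  constructor
  · intro H B hBd hgB hhB
    have hb : tp n (fun i : Fin n => B.coeff i) = B := tp_coeff n B hBd
    have h0 := H (fun i : Fin n => B.coeff i) (Submodule.mem_inf.mpr
      ⟨mem_cyclic.mpr (by rw [hb]; exact hgB),
       (mem_dual hn hg hgh hk _).mpr (by rw [hb]; exact hhB)⟩)
    rw [← hb, h0]
    exact (tp_eq_zero_iff n 0).mpr rfl
  · intro H x hx
    obtain ⟨hx1, hx2⟩ := Submodule.mem_inf.mp hx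
    exact (tp_eq_zero_iff n x).mp (H (tp n x) (natDegree_tp_lt n hn x)
      (mem_cyclic.mp hx1) ((mem_dual hn hg hgh hk x).mp hx2))

lemma poly_equiv (hn : 0 < n) (hg : g.Monic) (hgh : g * h = X^n - 1) :
    (∀ B : F[X], B.natDegree < n → g ∣ B → mrec h ∣ B → B = 0) ↔
    (g = mrec g ∧ ∀ p : F[X], p.Monic → Irreducible p → p ∣ g →
      ∀ e : ℕ, p ^ e ∣ g ↔ p ^ e ∣ (X^n - 1 : F[X])) := by
  classical
  have hh := h_monic hn hg hgh
  have hdeg := deg_add hn hg hgh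
  have hc0 := coeff0_mul hn hgh
  have hg0 : g.coeff 0 ≠ 0 := by
    intro e; rw [e, zero_mul] at hc0; exact absurd hc0.symm (by norm_num)
  have hh0 : h.coeff 0 ≠ 0 := by
    intro e; rw [e, mul_zero] at hc0; exact absurd hc0.symm (by norm_num)
  have hXne : (X^n - 1 : F[X]) ≠ 0 := (Xn_monic hn).ne_zero
  have hmm : mrec g * mrec h = X^n - 1 := by rw [← mrec_mul, hgh, mrec_Xn hn]
  have hgX : g ∣ (X^n - 1 : F[X]) := ⟨h, hgh.symm⟩
  have hhX : mrec h ∣ (X^n - 1 : F[X]) := ⟨mrec g, by rw [← hmm]; ring⟩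
  constructor
  · intro H
    have hL0 : lcm g (mrec h) ≠ 0 := fun e => ((lcm_eq_zero_iff _ _).mp e).elim hg.ne_zero (mrec_ne_zero hh0)
    have hLX : lcm g (mrec h) ∣ (X^n - 1 : F[X]) := lcm_dvd hgX hhX
    have hLdeg : (lcm g (mrec h)).natDegree = n := by
      have h1 : (lcm g (mrec h)).natDegree ≤ n := by
        have := natDegree_le_of_dvd hLX hXne
        rwa [Xn_natDegree hn] at this
      rcases lt_or_eq_of_le h1 with h2 | h2
      · exact absurd (H _ h2 (dvd_lcm_left _ _) (dvd_lcm_right _ _)) hL0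
      · exact h2
    have hgcd : (gcd g (mrec h)).natDegree = 0 := by
      have h1 := assoc_natDegree (gcd_mul_lcm g (mrec h))
        (mul_ne_zero hg.ne_zero (mrec_ne_zero hh0))
      rw [natDegree_mul (fun e => hg.ne_zero (((gcd_eq_zero_iff _ _).mp e).1) : gcd g (mrec h) ≠ 0) hL0,
        natDegree_mul hg.ne_zero (mrec_ne_zero hh0), mrec_natDegree hh0, hLdeg] at h1
      omega
    have hcop : IsCoprime g (mrec h) := by
      apply (gcd_isUnit_iff _ _).mp
      rw [isUnit_iff_degree_eq_zero, degree_eq_natDegree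
        (fun e => hg.ne_zero (((gcd_eq_zero_iff _ _).mp e).1)), hgcd]
      rfl
    have hggm : g = mrec g := by
      have hdvd : g ∣ mrec g := hcop.dvd_of_dvd_mul_right (hmm ▸ hgX)
      obtain ⟨c, hc⟩ := hdvd
      have hcm : c.Monic := hg.of_mul_monic_left (hc ▸ mrec_monic hg0)
      have hc0' : c.natDegree = 0 := by
        have := mrec_natDegree hg0
        rw [hc, natDegree_mul hg.ne_zero hcm.ne_zero] at this
        omega
      rw [hc, hcm.natDegree_eq_zero.mp hc0', mul_one]
    have hhm : mrec h = h := by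
      apply mul_left_cancel₀ hg.ne_zero
      rw [hgh]
      conv_lhs => rw [hggm]
      exact hmm
    refine ⟨hggm, fun p hpm hpirr hpg e => ⟨fun hpe => hpe.trans hgX, fun hpe => ?_⟩⟩
    have hph : ¬ p ∣ h := by
      intro hph
      exact hpirr.not_isUnit (hcop.isUnit_of_dvd' hpg (by rw [hhm]; exact hph))
    rw [← hgh] at hpe
    exact hpirr.prime.pow_dvd_of_dvd_mul_right _ hph hpe
  · rintro ⟨hgg, hmult⟩ B hBd hgB hhB
    have hhm : mrec h = h := by
      apply mul_left_cancel₀ hg.ne_zero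
      rw [hgh]
      conv_lhs => rw [hgg]
      exact hmm
    have hcop : IsCoprime g h := by
      apply (gcd_isUnit_iff _ _).mp
      by_contra hnu
      have hd0 : gcd g h ≠ 0 := fun e => hg.ne_zero ((gcd_eq_zero_iff _ _).mp e).1
      obtain ⟨p, hpirr, hpd⟩ := WfDvdMonoid.exists_irreducible_factor hnu hd0
      have hp0 : p ≠ 0 := fun e => hd0 (zero_dvd_iff.mp (e ▸ hpd))
      have hqirr : Irreducible (normalize p) :=
        ((normalize_associated p).symm.irreducible hpirr : _)
      have hqg : normalize p ∣ g := (normalize_associated p).dvd.trans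
        (hpd.trans (gcd_dvd_left g h))
      have hqh : normalize p ∣ h := (normalize_associated p).dvd.trans
        (hpd.trans (gcd_dvd_right g h))
      have hqdeg : 0 < (normalize p).natDegree := hqirr.natDegree_pos
      have hbound : ∀ e : ℕ, (normalize p) ^ e ∣ g → e ≤ g.natDegree := by
        intro e he
        have h1 := natDegree_le_of_dvd he hg.ne_zero
        rw [natDegree_pow] at h1
        calc e = e * 1 := (Nat.mul_one e).symm
          _ ≤ e * (normalize p).natDegree := Nat.mul_le_mul_left e hqdeg
          _ ≤ g.natDegree := h1
      have hM1 : (normalize p) ^ (Nat.findGreatest (fun e => (normalize p) ^ e ∣ g) g.natDegree) ∣ g :=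
        Nat.findGreatest_spec (P := fun e => (normalize p) ^ e ∣ g) (Nat.zero_le _) (by simp)
      have hM2 : ¬ (normalize p) ^ (Nat.findGreatest (fun e => (normalize p) ^ e ∣ g) g.natDegree + 1) ∣ g := by
        intro hdvd
        have h1 := Nat.le_findGreatest (P := fun e => (normalize p) ^ e ∣ g) (hbound _ hdvd) hdvd
        omega
      apply hM2
      apply (hmult (normalize p) (monic_normalize hp0) hqirr hqg _).mpr
      rw [← hgh, pow_succ]
      exact mul_dvd_mul hM1 hqh
    have hXB : (X^n - 1 : F[X]) ∣ B := by
      rw [← hgh]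
      exact hcop.mul_dvd hgB (by rw [← hhm]; exact hhB)
    by_contra hB0
    have := natDegree_le_of_dvd hXB hB0
    rw [Xn_natDegree hn] at this
    omega

end context
end dev

theorem stmt5 {F : Type*} [Field F] [Fintype F] {n : ℕ} (hn : 0 < n)
    (g : F[X]) (hg : g.Monic) (hgdvd : g ∣ (Polynomial.X ^ n - 1 : F[X])) :
    IsLCD (cyclicCode n g) ↔
      (g = Polynomial.C (g.coeff 0)⁻¹ * g.reverse ∧
        ∀ p : F[X], p.Monic → Irreducible p → p ∣ g →
          ∀ e : ℕ, p ^ e ∣ g ↔ p ^ e ∣ (Polynomial.X ^ n - 1 : F[X])) := by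
  obtain ⟨h, hh'⟩ := hgdvd
  have hgh : g * h = X^n - 1 := hh'.symm
  by_cases hk : 0 < g.natDegree
  · rw [lcd_iff hn hg hgh hk, poly_equiv hn hg hgh]
    exact Iff.rfl
  · have hg1 : g = 1 := hg.natDegree_eq_zero.mp (by omega)
    constructor
    · intro _
      constructor
      · rw [hg1]
        simp [reverse]
      · intro p _ hpirr hpdvd e
        rw [hg1] at hpdvd
        exact absurd (isUnit_of_dvd_one hpdvd) hpirr.not_isUnit
    · intro _
      rw [IsLCD, Submodule.eq_bot_iff]
      intro x hx
      obtain ⟨hx1, hx2⟩ := Submodule.mem_inf.mp hx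
      funext j
      have hmem : (Pi.single j 1 : Fin n → F) ∈ cyclicCode n g := by
        rw [mem_cyclic, hg1]
        exact one_dvd _
      have h1 := hx2 _ hmem
      simpa [Pi.single_apply] using h1
end

section
/- Let F_q have characteristic p, and write n = p^t·l with gcd(l,p) = 1. A cyclic code C of length n over F_q is an LCD code if and only if its generator polynomial g(x) has the form g(x) = f(x)^{p^t}, where f(x) is a monic squarefree self-reciprocal divisor of x^l − 1 over F_q. (Equivalently, writing x^l − 1 = δ f_1⋯f_k h_1 h_1*⋯h_s h_s* with f_i irreducible and associate to their own reciprocals and (h_j, h_j*) pairs of mutually reciprocal irreducibles, g(x) = Π_i f_i^{α_i} Π_j (h_j h_j*)^{β_j} with each α_i ∈ {0, p^t} and each β_j ∈ {0, p^t}.) -/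
open Polynomial Matrix Finset

variable {F : Type*} [Field F]

section AuxLCD
variable {F : Type*} [Field F]

lemma myNatDegree_reflect_le {f : F[X]} {N : ℕ} (h : f.natDegree ≤ N) :
    (reflect N f).natDegree ≤ N := by
  apply natDegree_le_iff_coeff_eq_zero.2
  intro m hm
  rw [coeff_reflect]
  apply coeff_eq_zero_of_natDegree_lt
  rw [revAt_eq_self_of_lt hm]; omega
  
lemma myReflect_reflect (N : ℕ) (f : F[X]) : reflect N (reflect N f) = f := by
  ext i
  rw [coeff_reflect, coeff_reflect, revAt_invol]

lemma myReverse_pow (f : F[X]) (N : ℕ) : (f ^ N).reverse = f.reverse ^ N := by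
  induction N with
  | zero => simp [reverse, reflect_one]
  | succ n ih => rw [pow_succ, pow_succ, reverse_mul_of_domain, ih]

noncomputable def toPoly (n : ℕ) (c : Fin n → F) : F[X] := ∑ i : Fin n, C (c i) * X ^ (i : ℕ)

lemma toPoly_coeff (n : ℕ) (c : Fin n → F) (j : ℕ) :
    (toPoly n c).coeff j = if h : j < n then c ⟨j, h⟩ else 0 := by
  rw [toPoly, finset_sum_coeff]
  simp only [coeff_C_mul, coeff_X_pow, mul_ite, mul_one, mul_zero]
  split
  · next h =>
    rw [Finset.sum_eq_single (⟨j, h⟩ : Fin n)]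
    · simp
    · intro b _ hb
      rw [if_neg]
      simpa [Fin.ext_iff, eq_comm] using hb
    · simp
  · next h =>
    apply Finset.sum_eq_zero
    intro i _
    rw [if_neg]
    exact fun hij => h (hij ▸ i.isLt)

lemma toPoly_coeff_fin (n : ℕ) (c : Fin n → F) (i : Fin n) :
    (toPoly n c).coeff (i : ℕ) = c i := by
  rw [toPoly_coeff, dif_pos i.isLt]

lemma toPoly_degree (n : ℕ) (c : Fin n → F) : (toPoly n c).degree < n := by
  apply degree_lt_iff_coeff_zero _ _ |>.2
  intro m hm
  rw [toPoly_coeff, dif_neg (by exact_mod_cast Nat.not_lt.2 (by exact_mod_cast hm))]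

lemma toPoly_eq_zero {n : ℕ} {c : Fin n → F} : toPoly n c = 0 ↔ c = 0 := by
  constructor
  · intro h
    funext i
    have := toPoly_coeff_fin n c i
    rw [h, coeff_zero] at this
    exact this.symm
  · rintro rfl; simp [toPoly]

lemma toPoly_ofCoeff {n : ℕ} {P : F[X]} (h : P.degree < n) :
    toPoly n (fun i : Fin n => P.coeff i) = P := by
  ext j
  rw [toPoly_coeff]
  split
  · rfl
  · next hj =>
    symm
    exact coeff_eq_zero_of_degree_lt (lt_of_lt_of_le h (by exact_mod_cast Nat.le_of_not_lt hj))

lemma stepB {n : ℕ} (hn : 0 < n) {g : F[X]} (hg : g.Monic) (R : F[X]) :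
    (∀ s : F[X], (g*s).degree < n → (R * (g*s)).coeff (n-1) = 0) ↔
      (∀ k, g.natDegree ≤ k → k < n → (R*g).coeff k = 0) := by
  constructor
  · intro hB k hk1 hk2
    have h1 := hB (X ^ (n-1-k)) ?_
    · rwa [← mul_assoc, coeff_mul_X_pow', if_pos (by omega),
        show n - 1 - (n - 1 - k) = k by omega] at h1
    · rw [degree_mul, degree_X_pow, degree_eq_natDegree hg.ne_zero]
      rw [← Nat.cast_add]
      exact_mod_cast (by omega : g.natDegree + (n-1-k) < n)
  · intro hC s hs
    rw [← mul_assoc, coeff_mul]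
    apply Finset.sum_eq_zero
    rintro ⟨i, j⟩ hij
    rw [Finset.HasAntidiagonal.mem_antidiagonal] at hij
    simp only
    rcases le_or_gt g.natDegree i with hKi | hKi
    · rw [hC i hKi (by omega), zero_mul]
    · rcases eq_or_ne s 0 with rfl | hs0
      · simp
      · have hdeg : g.natDegree + s.natDegree ≤ n - 1 := by
          have := hs
          rw [degree_mul, degree_eq_natDegree hg.ne_zero, degree_eq_natDegree hs0,
            ← Nat.cast_add] at this
          have := Nat.cast_lt.mp this
          omega
        rw [coeff_eq_zero_of_natDegree_lt (show s.natDegree < j by omega), mul_zero]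

lemma stepC {n : ℕ} (hn : 0 < n) {g h : F[X]} (hg : g.Monic) (hgh : g * h = X^n - 1)
    (R : F[X]) (hR : R.natDegree ≤ n - 1) :
    (∀ k, g.natDegree ≤ k → k < n → (R*g).coeff k = 0) ↔ h ∣ R := by
  have hXn : (X^n - 1 : F[X]).Monic := by
    have := monic_X_pow_sub_C (1 : F) (by omega : n ≠ 0)
    simpa using this
  have hXnd : (X^n - 1 : F[X]).natDegree = n := by
    have := natDegree_X_pow_sub_C (n := n) (r := (1:F))
    simpa using this
  have hXnne : (X^n - 1 : F[X]) ≠ 0 := hXn.ne_zero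
  have hKn : g.natDegree + h.natDegree = n := by
    have hh : h.Monic := hg.of_mul_monic_left (hgh ▸ hXn)
    rw [← hXnd, ← hgh, hg.natDegree_mul hh]
  constructor
  · intro hC
    set P := R * g with hP
    have hgP : g ∣ P := Dvd.intro_left R rfl
    set B := P /ₘ (X^n - 1) with hB
    set Rm := P %ₘ (X^n - 1) with hRm
    have key : Rm + (X^n-1) * B = P := modByMonic_add_div P (X^n - 1)
    have hRmdeg : Rm.degree < n := by
      have := degree_modByMonic_lt P hXn
      rwa [degree_eq_natDegree hXnne, hXnd] at this
    have hgRm : g ∣ Rm := by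
      have h2 : g ∣ (X^n-1) * B := by
        rw [← hgh, mul_assoc]; exact Dvd.intro _ rfl
      have : Rm = P - (X^n-1) * B := by rw [← key]; ring
      rw [this]
      exact dvd_sub hgP h2
    have hBdeg : B = 0 ∨ B.natDegree < g.natDegree := by
      rcases eq_or_ne B 0 with hB0 | hB0
      · exact Or.inl hB0
      · right
        have h1 : ((X^n-1) * B).natDegree = n + B.natDegree := by
          rw [natDegree_mul hXnne hB0, hXnd]
        have h2 : ((X^n-1)*B).natDegree ≤ n - 1 + g.natDegree := by
          have : (X^n-1)*B = P - Rm := by rw [← key]; ring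
          rw [this]
          apply le_trans (natDegree_sub_le _ _)
          have hPd : P.natDegree ≤ n - 1 + g.natDegree :=
            le_trans (natDegree_mul_le) (by omega)
          have hRmd : Rm.natDegree ≤ n - 1 := by
            rcases eq_or_ne Rm 0 with h0 | h0
            · simp [h0]
            · have := (degree_eq_natDegree h0) ▸ hRmdeg
              have := Nat.cast_lt.mp this
              omega
          omega
        omega
    have hRm0 : Rm = 0 := by
      apply eq_zero_of_dvd_of_degree_lt hgRm
      rw [degree_eq_natDegree hg.ne_zero]
      apply (degree_lt_iff_coeff_zero _ _).2
      intro m hm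
      have hm' : g.natDegree ≤ m := by exact_mod_cast hm
      rcases lt_or_ge m n with hmn | hmn
      · have : Rm = P - (X^n-1)*B := by rw [← key]; ring
        rw [this, coeff_sub, hC m hm' hmn]
        have : ((X^n-1)*B).coeff m = (B * X^n).coeff m - B.coeff m := by
          rw [sub_mul, one_mul, coeff_sub, mul_comm]
        rw [this, coeff_mul_X_pow', if_neg (by omega)]
        rcases hBdeg with hB0 | hBd
        · rw [hB0]; simp
        · rw [coeff_eq_zero_of_natDegree_lt (by omega)]
          ring
      · exact coeff_eq_zero_of_degree_lt (lt_of_lt_of_le hRmdeg (by exact_mod_cast hmn))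
    have hfin : R * g = (h * B) * g := by
      have : P = (X^n-1) * B := by rw [← key, hRm0, zero_add]
      rw [hP] at this
      rw [this, ← hgh]; ring
    exact ⟨B, mul_right_cancel₀ hg.ne_zero hfin⟩
  · rintro ⟨B, rfl⟩ k hk1 hk2
    have hrw : h * B * g = (X^n - 1) * B := by rw [← hgh]; ring
    rw [hrw]
    have : ((X^n-1)*B).coeff k = (B * X^n).coeff k - B.coeff k := by
      rw [sub_mul, one_mul, coeff_sub, mul_comm]
    rw [this, coeff_mul_X_pow', if_neg (by omega)]
    rcases eq_or_ne B 0 with rfl | hB0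
    · simp
    · rw [coeff_eq_zero_of_natDegree_lt]
      · ring
      · have h1 : (h*B).natDegree = h.natDegree + B.natDegree := by
          have hh : h ≠ 0 := by
            rintro rfl
            rw [mul_zero] at hgh
            exact hXnne hgh.symm
          exact natDegree_mul hh hB0
        omega


lemma inner_eq_coeff {n : ℕ} (hn : 0 < n) (c : Fin n → F) (P : F[X]) :
    ∑ i : Fin n, c i * P.coeff i = (reflect (n-1) (toPoly n c) * P).coeff (n-1) := by
  rw [coeff_mul, Finset.Nat.sum_antidiagonal_eq_sum_range_succ_mk]
  rw [show (n-1).succ = n from Nat.succ_pred_eq_of_pos hn]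
  have : ∀ k ∈ Finset.range n,
      (reflect (n-1) (toPoly n c)).coeff k * P.coeff (n - 1 - k)
      = (fun j => (toPoly n c).coeff j * P.coeff j) (n-1-k) := by
    intro k hk
    rw [Finset.mem_range] at hk
    rw [coeff_reflect, revAt_le (by omega)]
  rw [Finset.sum_congr rfl this, Finset.sum_range_reflect (fun j => (toPoly n c).coeff j * P.coeff j) n]
  rw [← Fin.sum_univ_eq_sum_range (fun j => (toPoly n c).coeff j * P.coeff j) n]
  apply Finset.sum_congr rfl
  intro i _
  rw [toPoly_coeff, dif_pos i.isLt]

lemma mem_cyclicCode {n : ℕ} {g : F[X]} {c : Fin n → F} :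
    c ∈ cyclicCode n g ↔ g ∣ toPoly n c := Iff.rfl

lemma natDegree_toPoly_le {n : ℕ} (hn : 0 < n) (c : Fin n → F) :
    (toPoly n c).natDegree ≤ n - 1 := by
  rcases eq_or_ne (toPoly n c) 0 with h0 | h0
  · simp [h0]
  · have := (natDegree_lt_iff_degree_lt h0).2 (toPoly_degree n c)
    omega

lemma mem_dual_iff {n : ℕ} (hn : 0 < n) {g h : F[X]} (hg : g.Monic)
    (hgh : g * h = X^n - 1) (c : Fin n → F) :
    c ∈ dualCode (cyclicCode n g) ↔ h ∣ reflect (n-1) (toPoly n c) := by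
  have hmem : c ∈ dualCode (cyclicCode n g) ↔
      ∀ b ∈ cyclicCode n g, ∑ i, c i * b i = 0 := Iff.rfl
  have hA : c ∈ dualCode (cyclicCode n g) ↔
      ∀ s : F[X], (g*s).degree < n →
        (reflect (n-1) (toPoly n c) * (g*s)).coeff (n-1) = 0 := by
    rw [hmem]
    constructor
    · intro hd s hs
      have hb : (fun i : Fin n => (g*s).coeff i) ∈ cyclicCode n g := by
        rw [mem_cyclicCode, toPoly_ofCoeff hs]
        exact Dvd.intro _ rfl
      have := hd _ hb
      rwa [inner_eq_coeff hn c (g*s)] at this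
    · intro hA b hb
      rw [mem_cyclicCode] at hb
      obtain ⟨s, hs⟩ := hb
      have h1 : ∑ i, c i * b i = ∑ i : Fin n, c i * (toPoly n b).coeff i := by
        apply Finset.sum_congr rfl
        intro i _
        rw [toPoly_coeff_fin]
      rw [h1, inner_eq_coeff hn c (toPoly n b), hs]
      exact hA s (hs ▸ toPoly_degree n b)
  rw [hA, stepB hn hg, stepC hn hg hgh]
  exact myNatDegree_reflect_le (natDegree_toPoly_le hn c)

lemma lcd_iff_coprime {n : ℕ} (hn : 0 < n) {g h : F[X]} (hg : g.Monic)
    (hgh : g * h = X^n - 1) :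
    IsLCD (cyclicCode n g) ↔ IsCoprime g.reverse h := by
  classical
  have hXn : (X^n - 1 : F[X]).Monic := by
    have := monic_X_pow_sub_C (1 : F) (by omega : n ≠ 0)
    simpa using this
  have hh : h.Monic := hg.of_mul_monic_left (hgh ▸ hXn)
  have hKn : g.natDegree + h.natDegree = n := by
    have hXnd : (X^n - 1 : F[X]).natDegree = n := by
      have := natDegree_X_pow_sub_C (n := n) (r := (1:F))
      simpa using this
    rw [← hXnd, ← hgh, hg.natDegree_mul hh]
  have hlcd : IsLCD (cyclicCode n g) ↔
      ∀ c, c ∈ cyclicCode n g → c ∈ dualCode (cyclicCode n g) → c = 0 := by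
    rw [IsLCD, Submodule.eq_bot_iff]
    constructor
    · intro h1 c h2 h3
      exact h1 c (Submodule.mem_inf.2 ⟨h2, h3⟩)
    · intro h1 c h2
      exact h1 c (Submodule.mem_inf.1 h2).1 (Submodule.mem_inf.1 h2).2
  rcases eq_or_ne h.natDegree 0 with hK | hK
  · -- h = 1, g = X^n - 1 case
    have h1 : h = 1 := hh.natDegree_eq_zero.1 hK
    apply iff_of_true
    · rw [hlcd]
      intro c hc _
      rw [mem_cyclicCode] at hc
      have : toPoly n c = 0 := by
        apply eq_zero_of_dvd_of_degree_lt hc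
        calc (toPoly n c).degree < (n : WithBot ℕ) := toPoly_degree n c
          _ = g.degree := by
            rw [degree_eq_natDegree hg.ne_zero]
            exact_mod_cast (by omega : n = g.natDegree)
      exact toPoly_eq_zero.1 this
    · rw [h1]; exact isCoprime_one_right
  · set K := g.natDegree with hKdef
    set M := n - 1 - K with hMdef
    have hKn1 : K ≤ n - 1 := by omega
    have hreflmul : ∀ q : F[X], q.natDegree ≤ M →
        reflect (n-1) (g * q) = g.reverse * reflect M q := by
      intro q hq
      rw [show n - 1 = K + M by omega, reflect_mul g q le_rfl hq]
      rfl
    rw [hlcd]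
    constructor
    · intro hlcd'
      by_contra hnc
      set d := gcd h g.reverse with hd
      have hdco : ¬ IsUnit d := by
        intro hu
        exact hnc ((gcd_isUnit_iff h g.reverse).1 hu).symm
      have hdh : d ∣ h := gcd_dvd_left h g.reverse
      have hdrev : d ∣ g.reverse := gcd_dvd_right h g.reverse
      have hdne : d ≠ 0 := by
        intro h0
        rw [h0] at hdh
        exact hh.ne_zero (zero_dvd_iff.1 hdh)
      have hd1 : 1 ≤ d.natDegree := by
        by_contra hcon
        push_neg at hcon
        obtain ⟨a, ha⟩ := natDegree_eq_zero.1 (by omega : d.natDegree = 0)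
        apply hdco
        rw [← ha]
        refine isUnit_C.2 (isUnit_iff_ne_zero.2 ?_)
        intro h0
        rw [h0, map_zero] at ha
        exact hdne ha.symm
      obtain ⟨r, hr⟩ := hdh
      have hrne : r ≠ 0 := by
        intro h0
        rw [h0, mul_zero] at hr
        exact hh.ne_zero hr
      have hrdeg : r.natDegree ≤ M := by
        have := natDegree_mul hdne hrne
        rw [← hr] at this
        omega
      set q := reflect M r with hqdef
      have hqr : reflect M q = r := myReflect_reflect M r
      have hqne : q ≠ 0 := by
        intro h0
        rw [h0, reflect_zero] at hqr
        exact hrne hqr.symm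
      have hqdeg : q.natDegree ≤ M := myNatDegree_reflect_le hrdeg
      have hane : g * q ≠ 0 := mul_ne_zero hg.ne_zero hqne
      have hadeg : (g * q).degree < n := by
        rw [degree_mul, degree_eq_natDegree hg.ne_zero, degree_eq_natDegree hqne,
          ← Nat.cast_add]
        exact_mod_cast (by omega : K + q.natDegree < n)
      set c : Fin n → F := fun i => (g * q).coeff i with hc
      have htc : toPoly n c = g * q := toPoly_ofCoeff hadeg
      have hcc : c ∈ cyclicCode n g := by
        rw [mem_cyclicCode, htc]
        exact Dvd.intro _ rfl
      have hcd : c ∈ dualCode (cyclicCode n g) := by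
        rw [mem_dual_iff hn hg hgh, htc, hreflmul q hqdeg, hqr]
        obtain ⟨s, hs⟩ := hdrev
        exact ⟨s, by rw [hs, hr]; ring⟩
      have := hlcd' c hcc hcd
      rw [this] at htc
      apply hane
      rw [← htc, toPoly]
      simp
    · intro hco c hcC hcD
      rw [mem_cyclicCode] at hcC
      obtain ⟨q, hq⟩ := hcC
      rcases eq_or_ne q 0 with rfl | hqne
      · rw [mul_zero] at hq
        exact toPoly_eq_zero.1 hq
      · have hqdeg : q.natDegree ≤ M := by
          have h1 : (toPoly n c).degree < n := toPoly_degree n c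
          rw [hq, degree_mul, degree_eq_natDegree hg.ne_zero,
            degree_eq_natDegree hqne, ← Nat.cast_add] at h1
          have := Nat.cast_lt.mp h1
          omega
        rw [mem_dual_iff hn hg hgh, hq, hreflmul q hqdeg] at hcD
        have hdr := hco.symm.dvd_of_dvd_mul_left hcD
        have hzero : reflect M q = 0 := by
          apply eq_zero_of_dvd_of_degree_lt hdr
          calc (reflect M q).degree ≤ ((reflect M q).natDegree : WithBot ℕ) :=
                degree_le_natDegree
            _ ≤ (M : WithBot ℕ) := by
                exact_mod_cast myNatDegree_reflect_le hqdeg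
            _ < h.degree := by
                rw [degree_eq_natDegree hh.ne_zero]
                exact_mod_cast (by omega : M < h.natDegree)
        have : q = 0 := by
          rw [← myReflect_reflect M q, hzero, reflect_zero]
        exact absurd this hqne



lemma dvd_gcd_pow {α : Type*} [CommMonoidWithZero α] [GCDMonoid α] :
    ∀ (N : ℕ) (D g : α), D ≠ 0 → g ∣ D ^ N → g ∣ (gcd g D) ^ N := by
  intro N
  induction N with
  | zero =>
    intro D g _ hg
    simpa using hg
  | succ N ih =>
    intro D g hD hg
    have hgne : g ≠ 0 := by
      intro h0
      rw [h0] at hg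
      exact pow_ne_zero _ hD (zero_dvd_iff.1 hg)
    have hdne : gcd g D ≠ 0 := fun h0 => hgne ((gcd_eq_zero_iff g D).1 h0).1
    have h1 : g ∣ gcd g D * gcd g (D ^ N) := by
      have h2 : g ∣ gcd g (D * D ^ N) := by
        rw [pow_succ'] at hg
        exact dvd_gcd dvd_rfl hg
      exact h2.trans (gcd_mul_dvd_mul_gcd g D (D ^ N))
    have h3 : g ∣ gcd g D * D ^ N := h1.trans (mul_dvd_mul_left _ (gcd_dvd_right _ _))
    obtain ⟨g', hg'⟩ := gcd_dvd_left g D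
    have h4 : g' ∣ D ^ N := by
      have h3' : gcd g D * g' ∣ gcd g D * D ^ N := by rw [← hg']; exact h3
      exact (mul_dvd_mul_iff_left hdne).1 h3'
    have h5 : g' ∣ (gcd g' D) ^ N := ih D g' hD h4
    have h6 : gcd g' D ∣ gcd g D :=
      dvd_gcd ((gcd_dvd_left g' D).trans ⟨gcd g D, by rw [mul_comm g' (gcd g D)]; exact hg'⟩) (gcd_dvd_right g' D)
    calc g = gcd g D * g' := hg'
      _ ∣ gcd g D * (gcd g' D) ^ N := mul_dvd_mul_left _ h5
      _ ∣ gcd g D * (gcd g D) ^ N := mul_dvd_mul_left _ (pow_dvd_pow_of_dvd h6 N)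
      _ = (gcd g D) ^ (N + 1) := by rw [← pow_succ']

lemma reverse_dvd_reverse {a b : F[X]} (h : a ∣ b) : a.reverse ∣ b.reverse := by
  obtain ⟨c, rfl⟩ := h
  rw [reverse_mul_of_domain]
  exact Dvd.intro _ rfl

lemma tilde_monic {a : F[X]} (h0 : a.coeff 0 ≠ 0) : (C (a.coeff 0)⁻¹ * a.reverse).Monic := by
  have hane : a ≠ 0 := fun h => h0 (by simp [h])
  have htr : a.trailingCoeff = a.coeff 0 := by
    rw [trailingCoeff, natTrailingDegree_eq_zero.2 (Or.inr h0)]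
  rw [Monic, leadingCoeff_mul, leadingCoeff_C, reverse_leadingCoeff, htr,
    inv_mul_cancel₀ h0]

lemma tilde_natDegree {a : F[X]} (h0 : a.coeff 0 ≠ 0) :
    (C (a.coeff 0)⁻¹ * a.reverse).natDegree = a.natDegree := by
  rw [natDegree_C_mul (inv_ne_zero h0), reverse_natDegree,
    natTrailingDegree_eq_zero.2 (Or.inr h0)]
  omega

lemma tilde_dvd_reverse {a : F[X]} (h0 : a.coeff 0 ≠ 0) :
    C (a.coeff 0)⁻¹ * a.reverse ∣ a.reverse :=
  ⟨C (a.coeff 0), by rw [mul_comm, ← mul_assoc, ← C_mul, mul_inv_cancel₀ h0, C_1, one_mul]⟩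

lemma reverse_eq_tilde {a : F[X]} (h0 : a.coeff 0 ≠ 0) :
    a.reverse = C (a.coeff 0) * (C (a.coeff 0)⁻¹ * a.reverse) := by
  rw [← mul_assoc, ← C_mul, mul_inv_cancel₀ h0, C_1, one_mul]

lemma monic_dvd_eq {a b : F[X]} (ha : a.Monic) (hb : b.Monic) (hd : a ∣ b)
    (hdeg : b.natDegree ≤ a.natDegree) : a = b := by
  obtain ⟨u, rfl⟩ := hd
  have hu : u.Monic := ha.of_mul_monic_left hb
  have : u.natDegree = 0 := by
    have := ha.natDegree_mul hu
    omega
  rw [hu.natDegree_eq_zero.1 this, mul_one]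

lemma reverse_X_pow_sub_one {l : ℕ} (hl : 0 < l) :
    (X ^ l - 1 : F[X]).reverse = -(X ^ l - 1) := by
  have hmon : (X ^ l - 1 : F[X]).Monic := by
    have := monic_X_pow_sub_C (1 : F) (by omega : l ≠ 0)
    simpa using this
  have hdeg : (X ^ l - 1 : F[X]).natDegree = l := by
    have := natDegree_X_pow_sub_C (n := l) (r := (1 : F))
    simpa using this
  rw [reverse, hdeg, reflect_sub, reflect_one]
  have : reflect l (X ^ l : F[X]) = 1 := by
    have h1 : (X ^ l : F[X]) = C 1 * X ^ l := by rw [C_1, one_mul]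
    rw [h1, reflect_C_mul_X_pow, revAt_le le_rfl, Nat.sub_self, pow_zero, C_1, one_mul]
  rw [this]
  ring

lemma coprime_iff_exists_f {l N : ℕ} (hl : 0 < l) (hN : 0 < N)
    (hsf : Squarefree (X ^ l - 1 : F[X])) {g h : F[X]} (hg : g.Monic)
    (hgh : g * h = (X ^ l - 1) ^ N) :
    IsCoprime g.reverse h ↔ ∃ f : F[X], f.Monic ∧ Squarefree f ∧ f ∣ (X ^ l - 1) ∧
      f = C (f.coeff 0)⁻¹ * f.reverse ∧ g = f ^ N := by
  classical
  set D : F[X] := X ^ l - 1 with hD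
  have hDmon : D.Monic := by
    have := monic_X_pow_sub_C (1 : F) (by omega : l ≠ 0)
    simpa using this
  have hDne : D ≠ 0 := hDmon.ne_zero
  have hD0 : D.coeff 0 = -1 := by
    rw [hD, coeff_sub, coeff_X_pow, if_neg (by omega), coeff_one, if_pos rfl]
    ring
  have hh : h.Monic := hg.of_mul_monic_left (hgh ▸ hDmon.pow N)
  have hg0 : g.coeff 0 ≠ 0 ∧ h.coeff 0 ≠ 0 := by
    have h1 : g.coeff 0 * h.coeff 0 = (-1) ^ N := by
      rw [← mul_coeff_zero, hgh, coeff_zero_eq_eval_zero, eval_pow, eval_sub, eval_pow,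
        eval_X, eval_one, zero_pow (by omega : l ≠ 0), zero_sub]
    constructor <;> (intro h0; rw [h0] at h1; simp at h1
                     exact pow_ne_zero N (neg_ne_zero.2 one_ne_zero) h1.symm)
  have hgdvd : g ∣ D ^ N := hgh ▸ Dvd.intro h rfl
  have hDrev : D.reverse = -D := reverse_X_pow_sub_one hl
  constructor
  · intro hc
    have htmon := tilde_monic hg0.1
    have hrevdvd : g.reverse ∣ D ^ N := by
      have h1 : g.reverse ∣ (D ^ N).reverse := reverse_dvd_reverse hgdvd
      rw [myReverse_pow, hDrev, neg_pow] at h1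
      rcases Nat.even_or_odd N with he | ho
      · rwa [he.neg_one_pow, one_mul] at h1
      · rw [ho.neg_one_pow] at h1
        exact (dvd_neg.1 (by rwa [neg_one_mul] at h1))
    have htdvdDN : C (g.coeff 0)⁻¹ * g.reverse ∣ D ^ N :=
      (tilde_dvd_reverse hg0.1).trans hrevdvd
    have htco : IsCoprime (C (g.coeff 0)⁻¹ * g.reverse) h :=
      hc.of_isCoprime_of_dvd_left (tilde_dvd_reverse hg0.1)
    have htdvdg : C (g.coeff 0)⁻¹ * g.reverse ∣ g :=
      htco.dvd_of_dvd_mul_right (hgh ▸ htdvdDN)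
    have hteq : C (g.coeff 0)⁻¹ * g.reverse = g :=
      monic_dvd_eq htmon hg htdvdg (le_of_eq (tilde_natDegree hg0.1).symm)
    have hrevg : g.reverse = C (g.coeff 0) * g := by
      conv_lhs => rw [reverse_eq_tilde hg0.1, hteq]
    have hcgh : IsCoprime g h := by
      rw [hrevg] at hc
      exact hc.of_mul_left_right
    set f : F[X] := gcd g D with hf
    have hfne : f ≠ 0 := fun h0 => hg.ne_zero ((gcd_eq_zero_iff g D).1 h0).1
    have hfmon : f.Monic := by
      have := monic_normalize (p := f) hfne
      rwa [_root_.normalize_gcd g D] at this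
    have hfg : f ∣ g := gcd_dvd_left g D
    have hfD : f ∣ D := gcd_dvd_right g D
    have hgfN : g ∣ f ^ N := dvd_gcd_pow N D g hDne hgdvd
    have hfNg : f ^ N ∣ g := by
      have h1 : IsCoprime (f ^ N) h := (hcgh.of_isCoprime_of_dvd_left hfg).pow_left
      exact h1.dvd_of_dvd_mul_right (hgh ▸ pow_dvd_pow_of_dvd hfD N)
    have hgfNeq : g = f ^ N :=
      eq_of_monic_of_associated hg (hfmon.pow N) (associated_of_dvd_dvd hgfN hfNg)
    have hf0 : f.coeff 0 ≠ 0 := by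
      obtain ⟨k, hk⟩ := hfD
      intro h0
      rw [hk, mul_coeff_zero, h0, zero_mul] at hD0
      exact one_ne_zero (neg_eq_zero.1 hD0.symm)
    have htf_dvd_D : C (f.coeff 0)⁻¹ * f.reverse ∣ D := by
      have h1 : f.reverse ∣ D.reverse := reverse_dvd_reverse hfD
      rw [hDrev] at h1
      exact (tilde_dvd_reverse hf0).trans (dvd_neg.1 h1)
    have htf_dvd_g : C (f.coeff 0)⁻¹ * f.reverse ∣ g := by
      have h1 : f.reverse ∣ g.reverse := reverse_dvd_reverse hfg
      rw [hrevg] at h1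
      have h2 : C (f.coeff 0)⁻¹ * f.reverse ∣ C (g.coeff 0) * g :=
        (tilde_dvd_reverse hf0).trans h1
      have h3 : C (g.coeff 0)⁻¹ * (C (g.coeff 0) * g) = g := by
        rw [← mul_assoc, ← C_mul, inv_mul_cancel₀ hg0.1, C_1, one_mul]
      exact h3 ▸ (Dvd.dvd.mul_left h2 _)
    have htf_eq : C (f.coeff 0)⁻¹ * f.reverse = f :=
      monic_dvd_eq (tilde_monic hf0) hfmon (dvd_gcd htf_dvd_g htf_dvd_D)
        (le_of_eq (tilde_natDegree hf0).symm)
    exact ⟨f, hfmon, hsf.squarefree_of_dvd hfD, hfD, htf_eq.symm, hgfNeq⟩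
  · rintro ⟨f, hfm, hfsq, hfD, hfsr, rfl⟩
    have hf0 : f.coeff 0 ≠ 0 := by
      intro h0
      rw [h0, _root_.inv_zero, C_0, zero_mul] at hfsr
      exact hfm.ne_zero hfsr
    have hrevf : f.reverse = C (f.coeff 0) * f := by
      conv_lhs => rw [reverse_eq_tilde hf0, ← hfsr]
    obtain ⟨e, he⟩ := hfD
    have hhe : h = e ^ N := by
      have h1 : f ^ N * h = f ^ N * e ^ N := by
        rw [hgh, he, mul_pow]
      exact mul_left_cancel₀ (pow_ne_zero _ hfm.ne_zero) h1
    have hfe : IsCoprime f e := by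
      classical
      apply (gcd_isUnit_iff f e).1
      apply hsf (gcd f e)
      rw [he]
      exact mul_dvd_mul (gcd_dvd_left f e) (gcd_dvd_right f e)
    rw [hhe, myReverse_pow, hrevf, mul_pow, ← C_pow]
    apply IsCoprime.mul_left
    · exact ⟨C ((f.coeff 0 ^ N)⁻¹), 0, by
        rw [zero_mul, add_zero, ← C_mul, inv_mul_cancel₀ (pow_ne_zero N hf0), C_1]⟩
    · exact hfe.pow

end AuxLCD

theorem stmt6 {F : Type*} [Field F] [Fintype F] {p : ℕ} (hp : p.Prime)
    [CharP F p] {n t l : ℕ} (hn : n = p ^ t * l) (hco : Nat.Coprime l p)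
    (g : F[X]) (hg : g.Monic) (hgdvd : g ∣ (Polynomial.X ^ n - 1 : F[X])) :
    IsLCD (cyclicCode n g) ↔
      ∃ f : F[X], f.Monic ∧ Squarefree f ∧ f ∣ (Polynomial.X ^ l - 1 : F[X]) ∧
        f = Polynomial.C (f.coeff 0)⁻¹ * f.reverse ∧ g = f ^ (p ^ t) := by
  haveI : Fact p.Prime := ⟨hp⟩
  have hl : 0 < l := by
    rcases Nat.eq_zero_or_pos l with rfl | h
    · have := (Nat.coprime_zero_left p).1 hco
      exact absurd this hp.one_lt.ne'
    · exact h
  have hn0 : 0 < n := hn ▸ Nat.mul_pos (pow_pos hp.pos t) hl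
  have hfact : ((X : F[X]) ^ l - 1) ^ (p ^ t) = X ^ n - 1 := by
    rw [sub_pow_char_pow, one_pow, ← pow_mul, hn, mul_comm]
  have hsf : Squarefree (X ^ l - 1 : F[X]) := by
    have hlF : (l : F) ≠ 0 := by
      intro h0
      have hdvd := (CharP.cast_eq_zero_iff F p l).1 h0
      have := Nat.dvd_one.1 (hco ▸ Nat.dvd_gcd hdvd dvd_rfl)
      exact absurd this hp.one_lt.ne'
    have := Polynomial.separable_X_pow_sub_C (1 : F) hlF one_ne_zero
    simpa using this.squarefree
  obtain ⟨h, hh⟩ := hgdvd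
  rw [lcd_iff_coprime hn0 hg hh.symm,
    coprime_iff_exists_f hl (pow_pos hp.pos t) hsf hg (by rw [hfact]; exact hh.symm)]
end

section
/- Let C_1,…,C_s be linear codes of length n over the finite field F_q and let A be an s×s quasi-orthogonal matrix over F_q (i.e., A·A^T is a diagonal matrix all of whose diagonal entries are nonzero). Then the matrix-product code C = [C_1,…,C_s]A is an LCD code if and only if C_1,…,C_s are all LCD codes. -/
open Polynomial Matrix Finset

variable {F : Type*} [Field F]

lemma mpc_pairing {s n : ℕ} (A : Matrix (Fin s) (Fin s) F)
    (c d : Fin s → Fin n → F) :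
    ∑ p : Fin s × Fin n, (∑ i, A i p.1 * c i p.2) * (∑ k, A k p.1 * d k p.2)
      = ∑ i, ∑ k, (A * Aᵀ) i k * ∑ t, c i t * d k t := by
  rw [Fintype.sum_prod_type]
  simp_rw [Finset.sum_mul_sum]
  rw [Finset.sum_comm]
  have : ∀ t : Fin n, ∑ j, ∑ i, ∑ k, (A i j * c i t) * (A k j * d k t)
      = ∑ i, ∑ k, (∑ j, A i j * A k j) * (c i t * d k t) := by
    intro t
    rw [Finset.sum_comm]
    refine Finset.sum_congr rfl fun i _ => ?_
    rw [Finset.sum_comm]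
    refine Finset.sum_congr rfl fun k _ => ?_
    rw [Finset.sum_mul]
    exact Finset.sum_congr rfl fun j _ => by ring
  simp_rw [this, Matrix.mul_apply, Matrix.transpose_apply]
  rw [Finset.sum_comm]
  refine Finset.sum_congr rfl fun i _ => ?_
  rw [Finset.sum_comm]
  refine Finset.sum_congr rfl fun k _ => ?_
  rw [Finset.mul_sum]

lemma mpc_pairing_diag {s n : ℕ} (A : Matrix (Fin s) (Fin s) F)
    (hQO₁ : ∀ i j, i ≠ j → (A * Aᵀ) i j = 0)
    (c d : Fin s → Fin n → F) :
    ∑ p : Fin s × Fin n, (∑ i, A i p.1 * c i p.2) * (∑ k, A k p.1 * d k p.2)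
      = ∑ i, (A * Aᵀ) i i * ∑ t, c i t * d i t := by
  rw [mpc_pairing]
  refine Finset.sum_congr rfl fun i _ => ?_
  rw [Finset.sum_eq_single i]
  · intro k _ hk
    rw [hQO₁ i k (Ne.symm hk), zero_mul]
  · intro h; exact absurd (Finset.mem_univ i) h

lemma mpc_inj {s n : ℕ} (A : Matrix (Fin s) (Fin s) F)
    (hQO₁ : ∀ i j, i ≠ j → (A * Aᵀ) i j = 0)
    (hQO₂ : ∀ i, (A * Aᵀ) i i ≠ 0)
    (c : Fin s → Fin n → F)
    (h : ∀ j t, ∑ i, A i j * c i t = 0) : c = 0 := by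
  funext i t
  have step : ∀ k, ∑ j, (A k j * c k t) * A i j = ((A * Aᵀ) i k) * c k t := by
    intro k
    rw [Matrix.mul_apply]
    simp_rw [Matrix.transpose_apply, Finset.sum_mul]
    exact Finset.sum_congr rfl fun j _ => by ring
  have key : ∑ j, (∑ k, A k j * c k t) * A i j = (A * Aᵀ) i i * c i t := by
    simp_rw [Finset.sum_mul]
    rw [Finset.sum_comm]
    calc ∑ k, ∑ j, (A k j * c k t) * A i j
        = ∑ k, ((A * Aᵀ) i k) * c k t := Finset.sum_congr rfl fun k _ => step k
      _ = (A * Aᵀ) i i * c i t := by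
          rw [Finset.sum_eq_single i]
          · intro k _ hk
            rw [hQO₁ i k (Ne.symm hk), zero_mul]
          · intro hh; exact absurd (Finset.mem_univ i) hh
  have hz : (A * Aᵀ) i i * c i t = 0 := by
    rw [← key]
    simp_rw [h, zero_mul, Finset.sum_const_zero]
  have : c i t = 0 := (mul_eq_zero.mp hz).resolve_left (hQO₂ i)
  simpa using this

theorem stmt9 {F : Type*} [Field F] [Fintype F]
    {s n : ℕ} (A : Matrix (Fin s) (Fin s) F)
    (hQO₁ : ∀ i j, i ≠ j → (A * Aᵀ) i j = 0)
    (hQO₂ : ∀ i, (A * Aᵀ) i i ≠ 0)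
    (C : Fin s → Submodule F (Fin n → F)) :
    IsLCD (matrixProductCode A C) ↔ ∀ i, IsLCD (C i) := by
  constructor
  · intro h i
    rw [IsLCD, Submodule.eq_bot_iff]
    rintro x ⟨hx1, hx2⟩
    classical
    set c : Fin s → Fin n → F := Function.update 0 i x with hc
    have hck : ∀ k, c k ∈ C k := by
      intro k
      by_cases hk : k = i
      · subst hk; simp [hc, Function.update_self]; exact hx1
      · simp [hc, Function.update_of_ne hk]
    have hmem : (fun p : Fin s × Fin n => ∑ k, A k p.1 * c k p.2)
        ∈ matrixProductCode A C := ⟨c, hck, rfl⟩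
    have hdual : (fun p : Fin s × Fin n => ∑ k, A k p.1 * c k p.2)
        ∈ dualCode (matrixProductCode A C) := by
      rintro b ⟨d, hd, rfl⟩
      rw [mpc_pairing_diag A hQO₁ c d]
      rw [Finset.sum_eq_zero]
      intro k _
      by_cases hk : k = i
      · subst hk
        have : ∑ t, c k t * d k t = 0 := by
          simpa [hc, Function.update_self] using hx2 (d k) (hd k)
        rw [this, mul_zero]
      · have : ∀ t, c k t = 0 := by intro t; simp [hc, Function.update_of_ne hk]
        simp [this]
    have h0 : (fun p : Fin s × Fin n => ∑ k, A k p.1 * c k p.2) = 0 := by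
      have := (Submodule.eq_bot_iff _).mp h _ ⟨hmem, hdual⟩
      exact this
    have hc0 : c = 0 := by
      refine mpc_inj A hQO₁ hQO₂ c fun j t => ?_
      exact congrFun h0 (j, t)
    have : c i = 0 := by rw [hc0]; rfl
    simpa [hc, Function.update_self] using this
  · intro h
    rw [IsLCD, Submodule.eq_bot_iff]
    rintro x ⟨hx1, hx2⟩
    obtain ⟨c, hc, rfl⟩ := hx1
    classical
    have hck : ∀ k, c k ∈ dualCode (C k) := by
      intro k b hb
      set d : Fin s → Fin n → F := Function.update 0 k b with hd
      have hdk : ∀ i, d i ∈ C i := by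
        intro i
        by_cases hi : i = k
        · subst hi; simpa [hd, Function.update_self] using hb
        · simp [hd, Function.update_of_ne hi]
      have := hx2 _ ⟨d, hdk, rfl⟩
      rw [mpc_pairing_diag A hQO₁ c d] at this
      rw [Finset.sum_eq_single k] at this
      · have hsum : ∑ t, c k t * d k t = 0 :=
          (mul_eq_zero.mp this).resolve_left (hQO₂ k)
        simpa [hd, Function.update_self] using hsum
      · intro i _ hi
        have : ∀ t, d i t = 0 := by intro t; simp [hd, Function.update_of_ne hi]
        simp [this]
      · intro hh; exact absurd (Finset.mem_univ k) hh
    have hc0 : ∀ k, c k = 0 := by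
      intro k
      have := (Submodule.eq_bot_iff _).mp (h k) (c k) ⟨hc k, hck k⟩
      exact this
    funext p
    simp [hc0]
end
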